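/- arXiv:1805.03396 — 6 statements merged into one kernel-verified Lean document; each statement's English description precedes it below -/
import Mathlib

section
/- Let (λ₁,...,λₙ) and (μ₁,...,μₙ) be vectors in ℂⁿ. If there exists a doubly stochastic matrix D ∈ Mₙ(ℂ) with (λ₁,...,λₙ)ᵀ = D(μ₁,...,μₙ)ᵀ, then the diagonal matrix diag(λ₁,...,λₙ) lies in the convex hull of the unitary orbit of diag(μ₁,...,μₙ) in Mₙ(ℂ). -/
open Matrix Equiv

lemma permMatrix_entry {n : ℕ} (σ : Equiv.Perm (Fin n)) (i j : Fin n) :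
    σ.permMatrix ℂ i j = if σ i = j then 1 else 0 := by
  simp [PEquiv.toMatrix_apply, Equiv.toPEquiv_apply]

lemma star_permMatrix {n : ℕ} (σ : Equiv.Perm (Fin n)) :
    star (σ.permMatrix ℂ) = σ⁻¹.permMatrix ℂ := by
  ext i j
  simp only [Matrix.star_apply, permMatrix_entry]
  rcases eq_or_ne (σ j) i with h | h
  · rw [if_pos h, if_pos (by simp [← h]), star_one]
  · rw [if_neg h, if_neg (fun hc => h (by simp [← hc])), star_zero]

lemma permMatrix_mem_unitary {n : ℕ} (σ : Equiv.Perm (Fin n)) :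
    σ.permMatrix ℂ ∈ unitary (Matrix (Fin n) (Fin n) ℂ) := by
  constructor
  · rw [star_permMatrix, PEquiv.toMatrix_toPEquiv_mul]
    ext i j
    simp [permMatrix_entry, one_apply, Equiv.toPEquiv_apply]
  · rw [star_permMatrix, PEquiv.mul_toMatrix_toPEquiv]
    ext i j
    simp only [submatrix_apply, permMatrix_entry, one_apply, id_eq]
    have h2 : (Equiv.symm σ⁻¹) j = σ j := by simp [Equiv.Perm.inv_def]
    rw [h2]
    by_cases h : i = j
    · simp [h]
    · rw [if_neg (fun hc => h (σ.injective hc)), if_neg h]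

lemma conj_diagonal {n : ℕ} (σ : Equiv.Perm (Fin n)) (mu : Fin n → ℂ) :
    star (σ⁻¹.permMatrix ℂ) * Matrix.diagonal mu * σ⁻¹.permMatrix ℂ
      = Matrix.diagonal (fun i => mu (σ i)) := by
  rw [star_permMatrix, inv_inv, PEquiv.toMatrix_toPEquiv_mul, PEquiv.mul_toMatrix_toPEquiv]
  ext i j
  simp only [submatrix_apply, id_eq, diagonal_apply]
  have h2 : (Equiv.symm σ⁻¹) j = σ j := by simp [Equiv.Perm.inv_def]
  rw [h2]
  by_cases h : i = j
  · simp [h]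
  · rw [if_neg (fun hc => h (σ.injective hc)), if_neg h]

/-- Horn/Birkhoff direction: if the vector λ is obtained from μ by a doubly
stochastic matrix, then diag(λ) is in the convex hull of the unitary orbit of diag(μ). -/
theorem diagonal_mem_convexHull_unitaryOrbit_of_doublyStochastic {n : ℕ}
    (lam mu : Fin n → ℂ) (D : Matrix (Fin n) (Fin n) ℝ)
    (hD0 : ∀ i j, 0 ≤ D i j) (hD1 : ∀ i j, D i j ≤ 1)
    (hrow : ∀ i, ∑ j, D i j = 1) (hcol : ∀ j, ∑ i, D i j = 1)
    (heq : ∀ i, lam i = ∑ j, (D i j : ℂ) * mu j) :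
    Matrix.diagonal lam ∈ convexHull ℝ
      {M : Matrix (Fin n) (Fin n) ℂ |
        ∃ U ∈ unitary (Matrix (Fin n) (Fin n) ℂ), M = star U * Matrix.diagonal mu * U} := by
  have hDmem : D ∈ doublyStochastic ℝ (Fin n) := by
    rw [mem_doublyStochastic_iff_sum]
    exact ⟨hD0, hrow, hcol⟩
  obtain ⟨w, hw0, hw1, hwD⟩ := exists_eq_sum_perm_of_mem_doublyStochastic hDmem
  refine mem_convexHull_of_exists_fintype w
    (fun σ => star (σ⁻¹.permMatrix ℂ) * Matrix.diagonal mu * σ⁻¹.permMatrix ℂ)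
    hw0 hw1 (fun σ => ⟨σ⁻¹.permMatrix ℂ, permMatrix_mem_unitary _, rfl⟩) ?_
  have hD : ∀ i j, D i j = ∑ σ : Equiv.Perm (Fin n), if σ i = j then w σ else 0 := by
    intro i j
    rw [← hwD, Matrix.sum_apply]
    refine Finset.sum_congr rfl fun σ _ => ?_
    simp [PEquiv.toMatrix_apply, Equiv.toPEquiv_apply]
  simp only [conj_diagonal]
  ext i j
  rw [Matrix.sum_apply]
  simp only [Matrix.smul_apply, diagonal_apply]
  rcases eq_or_ne i j with rfl | hij
  · simp only [if_pos rfl, heq i]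
    have hcast : ∀ j', ((D i j' : ℝ) : ℂ)
        = ∑ σ : Equiv.Perm (Fin n), if σ i = j' then (w σ : ℂ) else 0 := by
      intro j'
      rw [hD i j']
      push_cast
      exact Finset.sum_congr rfl fun σ _ => by split <;> simp
    simp_rw [hcast, Finset.sum_mul]
    rw [Finset.sum_comm]
    refine Finset.sum_congr rfl fun σ _ => ?_
    rw [Complex.real_smul]
    simp [ite_mul]
  · simp [hij]
end

section
/- Let A be a unital C*-algebra, a ∈ A, and let K > 1 be an integer. Let y = diag(a,a,...,a) (K copies) and y' = diag(0,a,...,a) (one zero followed by K−1 copies of a), viewed in M_K(A) ⊆ some unital C*-algebra where these make sense as orthogonal sums. Then the distance from y to the convex hull of the unitary orbit of y' is at most ‖a‖/K. -/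
section aux

variable {A : Type*} [Ring A] [StarRing A] {K : ℕ} [NeZero K]

/-- The cyclic shift permutation matrix. -/
private def shiftMat (A : Type*) [Ring A] (K : ℕ) [NeZero K] (j : Fin K) :
    Matrix (Fin K) (Fin K) A :=
  Matrix.of fun i k => if k = i + j then 1 else 0

private lemma star_shiftMat (j : Fin K) :
    star (shiftMat A K j) = shiftMat A K (-j) := by
  ext i k
  simp only [Matrix.star_apply, shiftMat, Matrix.of_apply, apply_ite (star : A → A),
    star_one, star_zero, sub_eq_add_neg]
  have : i = k + j ↔ k = i + -j := by
    constructor <;> intro h <;> subst h <;> simp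
  simp [this]

private lemma shiftMat_conj (j : Fin K) (v : Fin K → A) :
    star (shiftMat A K j) * Matrix.diagonal v * shiftMat A K j
      = Matrix.diagonal fun i => v (i - j) := by
  have h1 : star (shiftMat A K j) * Matrix.diagonal v
      = Matrix.of fun i m => if m = i - j then v m else 0 := by
    ext i m
    rw [Matrix.mul_apply, Finset.sum_eq_single (i - j)]
    · by_cases h : m = i - j
      · subst h
        simp [star_shiftMat, shiftMat, Matrix.diagonal_apply, sub_eq_add_neg]
      · have ha : ¬ (i + -j = m) := fun hh => h (by rw [sub_eq_add_neg]; exact hh.symm)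
        have hb : ¬ (m = i + -j) := fun hh => h (by rw [sub_eq_add_neg]; exact hh)
        simp [star_shiftMat, shiftMat, Matrix.diagonal_apply, sub_eq_add_neg, ha, hb]
    · intro l _ hl
      have hli : i ≠ l + j := fun hh => hl (by rw [hh, add_sub_cancel_right])
      simp [star_shiftMat, shiftMat, hli, Matrix.diagonal_apply]
    · simp
  rw [h1]
  ext i k
  rw [Matrix.mul_apply, Finset.sum_eq_single (k - j)]
  · by_cases h : i = k
    · subst h
      simp [shiftMat, Matrix.diagonal_apply]
    · have h2 : ¬ (k - j = i - j) := fun hh => h (by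
        have := congrArg (· + j) hh
        simpa using this.symm)
      simp [shiftMat, Matrix.diagonal_apply, h, h2]
  · intro l _ hl
    have hkl : ¬ k = l + j := fun hh => hl (by rw [hh, add_sub_cancel_right])
    simp [shiftMat, Matrix.of_apply, hkl]
  · simp

private lemma shiftMat_mem_unitary (j : Fin K) :
    shiftMat A K j ∈ unitary (Matrix (Fin K) (Fin K) A) := by
  have key : ∀ i : Fin K, star (shiftMat A K i) * shiftMat A K i = 1 := by
    intro i
    have := shiftMat_conj i (fun _ => (1 : A))
    simpa [Matrix.diagonal_one] using this
  refine Unitary.mem_iff.mpr ⟨key j, ?_⟩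
  have := key (-j)
  rwa [← star_shiftMat, star_star] at this

/-- diagonal embedding as a star algebra homomorphism. -/
private def diagHom (A : Type*) [Ring A] [StarRing A] [Algebra ℂ A] [StarModule ℂ A]
    (K : ℕ) : A →⋆ₐ[ℂ] Matrix (Fin K) (Fin K) A where
  toFun a := Matrix.diagonal fun _ => a
  map_one' := Matrix.diagonal_one
  map_mul' a b := by rw [Matrix.diagonal_mul_diagonal]
  map_zero' := Matrix.diagonal_zero
  map_add' a b := (Matrix.diagonal_add _ _).symm
  commutes' c := by
    rw [Matrix.algebraMap_eq_diagonal]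
    rfl
  map_star' a := by
    rw [Matrix.star_eq_conjTranspose, Matrix.diagonal_conjTranspose]
    rfl

end aux

/-- for y = diag(a,...,a) (K copies) and y' = diag(0,a,...,a) in M_K(A)
(viewed inside a unital C*-algebra B via an injective — hence isometric —
star-algebra embedding ψ), the distance from y to the convex hull of the unitary
orbit of y' is at most ‖a‖/K. -/
theorem dist_diag_convexHull_unitaryOrbit_le {A B : Type*} [CStarAlgebra A] [CStarAlgebra B]
    (K : ℕ) (hK : 1 < K) (a : A)
    (ψ : Matrix (Fin K) (Fin K) A →⋆ₐ[ℂ] B) (hψ : Function.Injective ψ) :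
    Metric.infDist (ψ (Matrix.diagonal fun _ => a))
      (convexHull ℝ {z | ∃ u ∈ unitary (Matrix (Fin K) (Fin K) A),
        z = ψ (star u * Matrix.diagonal (fun i : Fin K => if (i : ℕ) = 0 then 0 else a) * u)})
      ≤ ‖a‖ / K := by
  haveI : NeZero K := ⟨by omega⟩
  have hK0 : (0 : ℝ) < (K : ℝ) := by exact_mod_cast Nat.zero_lt_of_lt hK
  set d0 : Matrix (Fin K) (Fin K) A :=
    Matrix.diagonal (fun i : Fin K => if (i : ℕ) = 0 then 0 else a) with hd0
  set y : Matrix (Fin K) (Fin K) A := Matrix.diagonal fun _ => a with hy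
  set c : Fin K → Matrix (Fin K) (Fin K) A :=
    fun j => star (shiftMat A K j) * d0 * shiftMat A K j with hc
  set S : Set B := {z | ∃ u ∈ unitary (Matrix (Fin K) (Fin K) A),
        z = ψ (star u * d0 * u)} with hS
  -- each conjugate is in the set
  have hmem : ∀ j, ψ (c j) ∈ S := fun j => ⟨shiftMat A K j, shiftMat_mem_unitary j, rfl⟩
  -- the centroid is in the convex hull
  set z : B := (K : ℝ)⁻¹ • ∑ j : Fin K, ψ (c j) with hz
  have hzmem : z ∈ convexHull ℝ S := by
    have := Finset.centerMass_mem_convexHull (Finset.univ : Finset (Fin K))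
      (w := fun _ => (1 : ℝ)) (z := fun j => ψ (c j))
      (fun i _ => zero_le_one) (by simpa using hK0) (fun i _ => hmem i)
    simpa [Finset.centerMass, hz] using this
  -- key algebraic identity : ∑ j, (y - c j) = y
  have hsum : ∑ j : Fin K, (y - c j) = y := by
    have hcj : ∀ j, c j = Matrix.diagonal
        (fun i : Fin K => if ((i - j : Fin K) : ℕ) = 0 then 0 else a) := by
      intro j
      exact shiftMat_conj j _
    have : ∀ j : Fin K, y - c j = Matrix.diagonal (fun i => if i = j then a else 0) := by
      intro j
      rw [hcj, hy]
      ext i k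
      simp only [Matrix.sub_apply, Matrix.diagonal_apply]
      by_cases h : i = k
      · subst h
        by_cases h' : i = j
        · subst h'
          simp [Fin.val_zero]
        · have h1 : i - j ≠ 0 := sub_ne_zero.mpr h'
          have h2 : ((i - j : Fin K) : ℕ) ≠ 0 :=
            fun hh => h1 (Fin.ext (hh.trans (Fin.val_zero K).symm))
          simp [h2, h']
      · simp [h]
    simp only [this]
    rw [hy]
    ext i k
    rw [Matrix.sum_apply]
    by_cases h : i = k
    · subst h
      simp [Matrix.diagonal_apply, Finset.sum_ite_eq]
    · simp [Matrix.diagonal_apply, h]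
  -- the distance estimate
  have hdiff : ψ y - z = (K : ℝ)⁻¹ • ψ y := by
    have h1 : ψ y = (K : ℝ)⁻¹ • ((K : ℝ) • ψ y) := by
      rw [smul_smul, inv_mul_cancel₀ (ne_of_gt hK0), one_smul]
    have hKsmul : (K : ℝ) • ψ y = ∑ _j : Fin K, ψ y := by
      rw [Nat.cast_smul_eq_nsmul]
      simp
    have hsum2 : ∑ j : Fin K, (ψ y - ψ (c j)) = ψ y := by
      have hms : ∀ j : Fin K, ψ y - ψ (c j) = ψ (y - c j) := fun j => (map_sub ψ _ _).symm
      simp only [hms]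
      rw [← map_sum, hsum]
    calc ψ y - z = (K : ℝ)⁻¹ • ((K : ℝ) • ψ y - ∑ j : Fin K, ψ (c j)) := by
          rw [smul_sub, ← h1, hz]
      _ = (K : ℝ)⁻¹ • (∑ j : Fin K, (ψ y - ψ (c j))) := by
          rw [hKsmul, ← Finset.sum_sub_distrib]
      _ = (K : ℝ)⁻¹ • ψ y := by rw [hsum2]
  have hnorm : ‖ψ y‖ ≤ ‖a‖ := by
    have : ψ y = (ψ.comp (diagHom A K)) a := rfl
    rw [this]
    exact NonUnitalStarAlgHom.norm_apply_le (ψ.comp (diagHom A K)) a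
  calc Metric.infDist (ψ y) (convexHull ℝ S) ≤ dist (ψ y) z :=
        Metric.infDist_le_dist_of_mem hzmem
    _ = ‖ψ y - z‖ := dist_eq_norm _ _
    _ = (K : ℝ)⁻¹ * ‖ψ y‖ := by
        rw [hdiff, norm_smul, Real.norm_eq_abs, abs_of_pos (by positivity)]
    _ ≤ ‖a‖ / K := by rw [div_eq_inv_mul]; gcongr
end

section
/- Let A be a unital C*-algebra and let q, e, p be mutually orthogonal projections with q + e + p = 1_A. Suppose K ≥ 1 is an integer and there exist K mutually orthogonal projections q₁,...,q_K ≤ q and unitaries u₁,...,u_K ∈ A with uⱼ*euⱼ = qⱼ for each j. Then for any y' ∈ eAe and any y ∈ pAp, the distance from y to the convex hull of the unitary orbit of y + y' is at most ‖y'‖/(K+1). -/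
lemma orth_sum_pow {A : Type*} [Ring A] {n : ℕ} (g : Fin n → A)
    (h : ∀ i j, i ≠ j → g i * g j = 0) (m : ℕ) :
    (∑ i, g i) ^ (m + 1) = ∑ i, g i ^ (m + 1) := by
  induction m with
  | zero => simp
  | succ m ih =>
    rw [pow_succ, ih, Finset.sum_mul]
    refine Finset.sum_congr rfl fun i _ => ?_
    rw [Finset.mul_sum, Finset.sum_eq_single i]
    · rw [← pow_succ]
    · intro j _ hji
      rw [pow_succ, mul_assoc, h i j (Ne.symm hji), mul_zero]
    · intro hi; exact absurd (Finset.mem_univ i) hi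

lemma norm_sum_le_of_orth_sa {A : Type*} [CStarAlgebra A] {n : ℕ} (g : Fin n → A)
    (hsa : ∀ i, IsSelfAdjoint (g i)) (horth : ∀ i j, i ≠ j → g i * g j = 0)
    {C : ℝ} (hC : 0 ≤ C) (hg : ∀ i, ‖g i‖ ≤ C) : ‖∑ i, g i‖ ≤ C := by
  by_contra hlt
  push_neg at hlt
  set r := ‖∑ i, g i‖ with hr
  have hs : IsSelfAdjoint (∑ i, g i) := by
    unfold IsSelfAdjoint
    rw [star_sum]
    exact Finset.sum_congr rfl fun i _ => hsa i
  have key : ∀ k : ℕ, r ^ (2 ^ k) ≤ n * C ^ (2 ^ k) := by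
    intro k
    obtain ⟨m, hm⟩ : ∃ m, 2 ^ k = m + 1 := ⟨2 ^ k - 1, by have := Nat.one_le_two_pow (n := k); omega⟩
    have h1 : (∑ i, g i) ^ (2 ^ k) = ∑ i, g i ^ (2 ^ k) := by
      rw [hm]; exact orth_sum_pow g horth m
    have h2 : ‖(∑ i, g i) ^ (2 ^ k)‖ = r ^ (2 ^ k) := by
      have := hs.nnnorm_pow_two_pow k
      simpa using congrArg NNReal.toReal this
    have h3 : ∀ i, ‖g i ^ (2 ^ k)‖ ≤ C ^ (2 ^ k) := by
      intro i
      have h4 : ‖g i ^ (2 ^ k)‖ = ‖g i‖ ^ (2 ^ k) := by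
        simpa using congrArg NNReal.toReal ((hsa i).nnnorm_pow_two_pow k)
      rw [h4]
      exact pow_le_pow_left₀ (norm_nonneg _) (hg i) _
    calc r ^ (2 ^ k) = ‖∑ i, g i ^ (2 ^ k)‖ := by rw [← h2, h1]
      _ ≤ ∑ i : Fin n, ‖g i ^ (2 ^ k)‖ := norm_sum_le _ _
      _ ≤ ∑ _i : Fin n, C ^ (2 ^ k) := Finset.sum_le_sum fun i _ => h3 i
      _ = n * C ^ (2 ^ k) := by simp [Finset.sum_const, mul_comm]
  have hr0 : 0 ≤ r := norm_nonneg _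
  rcases eq_or_lt_of_le hC with h0 | hCpos
  · have := key 0
    simp [← h0] at this
    rw [← h0] at hlt
    linarith
  · have hr1 : 1 < r / C := (one_lt_div hCpos).2 hlt
    obtain ⟨m, hm⟩ := pow_unbounded_of_one_lt (n : ℝ) hr1
    have h5 : (r / C) ^ m ≤ (r / C) ^ (2 ^ m) :=
      pow_le_pow_right₀ hr1.le (Nat.lt_two_pow_self (n := m)).le
    have h6 : (r / C) ^ (2 ^ m) ≤ n := by
      rw [div_pow, div_le_iff₀ (pow_pos hCpos _)]
      exact key m
    linarith

lemma norm_sum_le_of_orth {A : Type*} [CStarAlgebra A] {n : ℕ} (f : Fin n → A)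
    (horth : ∀ i j, i ≠ j → star (f i) * f j = 0 ∧ f i * star (f j) = 0)
    {C : ℝ} (hC : 0 ≤ C) (hf : ∀ i, ‖f i‖ ≤ C) : ‖∑ i, f i‖ ≤ C := by
  have hxx : (∑ i, f i) * star (∑ i, f i) = ∑ i, f i * star (f i) := by
    rw [star_sum, Finset.sum_mul]
    refine Finset.sum_congr rfl fun i _ => ?_
    rw [Finset.mul_sum, Finset.sum_eq_single i]
    · intro j _ hji
      exact (horth i j (Ne.symm hji)).2
    · intro hi; exact absurd (Finset.mem_univ i) hi
  have hbound : ‖(∑ i, f i) * star (∑ i, f i)‖ ≤ C * C := by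
    rw [hxx]
    refine norm_sum_le_of_orth_sa _ (fun i => ?_) (fun i j hij => ?_)
      (mul_nonneg hC hC) (fun i => ?_)
    · exact IsSelfAdjoint.mul_star_self (f i)
    · calc f i * star (f i) * (f j * star (f j))
          = f i * (star (f i) * f j) * star (f j) := by noncomm_ring
        _ = 0 := by rw [(horth i j hij).1]; noncomm_ring
    · rw [CStarRing.norm_self_mul_star]
      exact mul_le_mul (hf i) (hf i) (norm_nonneg _) hC
  rw [CStarRing.norm_self_mul_star] at hbound
  nlinarith [norm_nonneg (∑ i, f i)]



/-- if q, e, p are mutually orthogonal projections summing to 1 and e is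
unitarily equivalent to K mutually orthogonal subprojections of q, then for y' ∈ eAe and
y ∈ pAp, the distance from y to the convex hull of the unitary orbit of y + y' is at most
‖y'‖/(K+1). -/
theorem dist_convexHull_unitaryOrbit_corner_le {A : Type*} [CStarAlgebra A]
    (K : ℕ) (hK : 1 ≤ K) (q e p : A)
    (hq : q * q = q ∧ star q = q) (he : e * e = e ∧ star e = e) (hp : p * p = p ∧ star p = p)
    (hqe : q * e = 0) (hqp : q * p = 0) (hep : e * p = 0)
    (hsum : q + e + p = 1)
    (q' : Fin K → A) (hq' : ∀ j, q' j * q' j = q' j ∧ star (q' j) = q' j)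
    (hq'o : ∀ i j, i ≠ j → q' i * q' j = 0)
    (hq'le : ∀ j, q' j * q = q' j)
    (u : Fin K → A) (hu : ∀ j, u j ∈ unitary A ∧ star (u j) * e * u j = q' j)
    (y' y : A) (hy' : e * y' * e = y') (hy : p * y * p = y) :
    Metric.infDist y (convexHull ℝ {z | ∃ v ∈ unitary A, z = star v * (y + y') * v})
      ≤ ‖y'‖ / (K + 1) := by
  obtain ⟨he2, hes⟩ := he
  obtain ⟨hp2, hps⟩ := hp
  -- basic orthogonality facts
  have heq : e * q = 0 := by
    have : e * q = star (q * e) := by rw [star_mul, hes, hq.2]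
    rw [this, hqe, star_zero]
  have hpe : p * e = 0 := by
    have : p * e = star (e * p) := by rw [star_mul, hes, hps]
    rw [this, hep, star_zero]
  have hpq : p * q = 0 := by
    have : p * q = star (q * p) := by rw [star_mul, hps, hq.2]
    rw [this, hqp, star_zero]
  have hqq' : ∀ j, q * q' j = q' j := by
    intro j
    have h1 : q * q' j = star (q' j * q) := by rw [star_mul, hq.2, (hq' j).2]
    rw [h1, hq'le j, (hq' j).2]
  have heq' : ∀ j, e * q' j = 0 := fun j => by
    rw [← hqq' j, ← mul_assoc, heq, zero_mul]
  have hq'e : ∀ j, q' j * e = 0 := fun j => by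
    rw [← hq'le j, mul_assoc, hqe, mul_zero]
  have hq'p : ∀ j, q' j * p = 0 := fun j => by
    rw [← hq'le j, mul_assoc, hqp, mul_zero]
  have hpq' : ∀ j, p * q' j = 0 := fun j => by
    rw [← hqq' j, ← mul_assoc, hpq, zero_mul]
  -- unitary facts
  have huu : ∀ j, star (u j) * u j = 1 := fun j => (Unitary.mem_iff.mp (hu j).1).1
  have huu' : ∀ j, u j * star (u j) = 1 := fun j => (Unitary.mem_iff.mp (hu j).1).2
  have heu : ∀ j, e * u j = u j * q' j := by
    intro j
    calc e * u j = (u j * star (u j)) * e * u j := by rw [huu' j, one_mul]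
      _ = u j * (star (u j) * e * u j) := by noncomm_ring
      _ = u j * q' j := by rw [(hu j).2]
  have hue : ∀ j, star (u j) * e = q' j * star (u j) := by
    intro j
    have := congrArg star (heu j)
    rw [star_mul, star_mul, hes, (hq' j).2] at this
    exact this
  -- the partial isometries
  set s : Fin K → A := fun j => star (u j) * e with hs_def
  have hsstar : ∀ j, star (s j) = e * u j := by
    intro j; simp only [hs_def, star_mul, star_star, hes]
  have hs_alt : ∀ j, s j = q' j * star (u j) := fun j => hue j
  have hsstar_alt : ∀ j, star (s j) = u j * q' j := by
    intro j; rw [hsstar j, heu j]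
  have hss' : ∀ j, s j * star (s j) = q' j := by
    intro j
    rw [hsstar j]
    show star (u j) * e * (e * u j) = q' j
    calc star (u j) * e * (e * u j) = star (u j) * (e * e) * u j := by noncomm_ring
      _ = q' j := by rw [he2, (hu j).2]
  have hs's : ∀ j, star (s j) * s j = e := by
    intro j
    rw [hsstar j]; show _ * (star (u j) * e) = e
    calc e * u j * (star (u j) * e) = e * (u j * star (u j)) * e := by noncomm_ring
      _ = e := by rw [huu' j, mul_one, he2]
  have hsq' : ∀ j, q' j * s j = s j := by
    intro j
    rw [hs_alt j, ← mul_assoc, (hq' j).1]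
  have hs'q' : ∀ j, star (s j) * q' j = star (s j) := by
    intro j
    rw [hsstar_alt j, mul_assoc, (hq' j).1]
  have hse : ∀ j, s j * e = s j := by
    intro j; show star (u j) * e * e = star (u j) * e; rw [mul_assoc, he2]
  have hes' : ∀ j, e * star (s j) = star (s j) := by
    intro j; rw [hsstar j, ← mul_assoc, he2]
  have hss0 : ∀ j, s j * s j = 0 := by
    intro j
    nth_rewrite 2 [hs_alt j]
    show star (u j) * e * (q' j * star (u j)) = 0
    calc star (u j) * e * (q' j * star (u j)) = star (u j) * (e * q' j) * star (u j) := by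
          noncomm_ring
      _ = 0 := by rw [heq' j, mul_zero, zero_mul]
  have hsq'0 : ∀ j, s j * q' j = 0 := by
    intro j; show star (u j) * e * q' j = 0
    rw [mul_assoc, heq' j, mul_zero]
  have hs'e0 : ∀ j, star (s j) * e = 0 := by
    intro j; rw [hsstar_alt j, mul_assoc, hq'e j, mul_zero]
  have hes0 : ∀ j, e * s j = 0 := by
    intro j; rw [hs_alt j, ← mul_assoc, heq' j, zero_mul]
  have hq's'0 : ∀ j, q' j * star (s j) = 0 := by
    intro j; rw [hsstar j, ← mul_assoc, hq'e j, zero_mul]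
  have hsp : ∀ j, s j * p = 0 := by
    intro j; show star (u j) * e * p = 0
    rw [mul_assoc, hep, mul_zero]
  have hs'p : ∀ j, star (s j) * p = 0 := by
    intro j; rw [hsstar_alt j, mul_assoc, hq'p j, mul_zero]
  have hps0 : ∀ j, p * s j = 0 := by
    intro j; rw [hs_alt j, ← mul_assoc, hpq' j, zero_mul]
  have hps' : ∀ j, p * star (s j) = 0 := by
    intro j; rw [hsstar j, ← mul_assoc, hpe, zero_mul]
  -- the unitaries
  set v : Fin K → A := fun j => s j + star (s j) + (1 - e - q' j) with hv_def
  have hvsa : ∀ j, star (v j) = v j := by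
    intro j
    simp only [hv_def, star_add, star_sub, star_one, hes, (hq' j).2, star_star]
    abel
  have hvv : ∀ j, v j * v j = 1 := by
    intro j
    have hce : (1 - e - q' j) * e = 0 := by
      rw [sub_mul, sub_mul, one_mul, he2, hq'e j]; abel
    have hcq' : (1 - e - q' j) * q' j = 0 := by
      rw [sub_mul, sub_mul, one_mul, heq' j, (hq' j).1]; abel
    have hec : e * (1 - e - q' j) = 0 := by
      rw [mul_sub, mul_sub, mul_one, he2, heq' j]; abel
    have hq'c : q' j * (1 - e - q' j) = 0 := by
      rw [mul_sub, mul_sub, mul_one, hq'e j, (hq' j).1]; abel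
    have hac : s j * (1 - e - q' j) = 0 := by
      rw [mul_sub, mul_sub, mul_one, hse j, hsq'0 j]; abel
    have hbc : star (s j) * (1 - e - q' j) = 0 := by
      rw [mul_sub, mul_sub, mul_one, hs'e0 j, hs'q' j]; abel
    have hca : (1 - e - q' j) * s j = 0 := by
      rw [sub_mul, sub_mul, one_mul, hes0 j, hsq' j]; abel
    have hcb : (1 - e - q' j) * star (s j) = 0 := by
      rw [sub_mul, sub_mul, one_mul, hes' j, hq's'0 j]; abel
    have hcc : (1 - e - q' j) * (1 - e - q' j) = 1 - e - q' j := by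
      rw [mul_sub, mul_sub, mul_one, hce, hcq']; abel
    have hbb : star (s j) * star (s j) = 0 := by
      have := congrArg star (hss0 j)
      rw [star_mul, star_zero] at this
      exact this
    have expand : v j * v j =
        s j * s j + s j * star (s j) + s j * (1 - e - q' j)
        + (star (s j) * s j + star (s j) * star (s j) + star (s j) * (1 - e - q' j))
        + ((1 - e - q' j) * s j + (1 - e - q' j) * star (s j)
           + (1 - e - q' j) * (1 - e - q' j)) := by
      simp only [hv_def]
      noncomm_ring
    rw [expand, hss0 j, hss' j, hac, hs's j, hbb, hbc, hca, hcb, hcc]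
    abel
  have hvmem : ∀ j, v j ∈ unitary A := by
    intro j
    rw [Unitary.mem_iff, hvsa j]
    exact ⟨hvv j, hvv j⟩
  have hvp : ∀ j, v j * p = p := by
    intro j
    simp only [hv_def, add_mul, sub_mul, one_mul, hsp j, hs'p j, hep, hq'p j]
    abel
  have hpv : ∀ j, p * v j = p := by
    intro j
    simp only [hv_def, mul_add, mul_sub, mul_one, hps0 j, hps' j, hpe, hpq' j]
    abel
  have hve : ∀ j, v j * e = s j := by
    intro j
    simp only [hv_def, add_mul, sub_mul, one_mul, hse j, hs'e0 j, he2, hq'e j]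
    abel
  have hev : ∀ j, e * v j = star (s j) := by
    intro j
    simp only [hv_def, mul_add, mul_sub, mul_one, hes0 j, hes' j, he2, heq' j]
    abel
  have hvyv : ∀ j, v j * y * v j = y := by
    intro j
    calc v j * y * v j = (v j * p) * y * (p * v j) := by
          conv_lhs => rw [← hy]
          simp only [mul_assoc]
      _ = p * y * p := by rw [hvp j, hpv j]
      _ = y := hy
  have hvy'v : ∀ j, v j * y' * v j = s j * y' * star (s j) := by
    intro j
    calc v j * y' * v j = (v j * e) * y' * (e * v j) := by
          conv_lhs => rw [← hy']
          simp only [mul_assoc]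
      _ = s j * y' * star (s j) := by rw [hve j, hev j]
  -- the family of orthogonal corner elements
  set f : Fin (K + 1) → A := fun i => Fin.cases y' (fun j => s j * y' * star (s j)) i with hf_def
  set P : Fin (K + 1) → A := fun i => Fin.cases e q' i with hP_def
  have hey' : e * y' = y' := by
    conv_lhs => rw [← hy']
    rw [← mul_assoc, ← mul_assoc, he2]
    exact hy'
  have hy'e : y' * e = y' := by
    conv_lhs => rw [← hy']
    rw [mul_assoc, he2, hy']
  have hPf : ∀ i, P i * f i = f i := by
    intro i
    induction i using Fin.cases with
    | zero => simpa [hf_def, hP_def] using hey'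
    | succ j =>
      simp only [hf_def, hP_def, Fin.cases_succ]
      rw [← mul_assoc, ← mul_assoc, hsq' j]
  have hfP : ∀ i, f i * P i = f i := by
    intro i
    induction i using Fin.cases with
    | zero => simpa [hf_def, hP_def] using hy'e
    | succ j =>
      simp only [hf_def, hP_def, Fin.cases_succ]
      rw [mul_assoc, hs'q' j]
  have hPP : ∀ i j, i ≠ j → P i * P j = 0 := by
    intro i j hij
    induction i using Fin.cases with
    | zero =>
      induction j using Fin.cases with
      | zero => exact absurd rfl hij
      | succ k => simpa [hP_def] using heq' k
    | succ k =>
      induction j using Fin.cases with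
      | zero => simpa [hP_def] using hq'e k
      | succ l =>
        have : k ≠ l := fun h => hij (by rw [h])
        simpa [hP_def] using hq'o k l this
  have hPsa : ∀ i, star (P i) = P i := by
    intro i
    induction i using Fin.cases with
    | zero => simpa [hP_def] using hes
    | succ k => simpa [hP_def] using (hq' k).2
  have horth : ∀ i j, i ≠ j → star (f i) * f j = 0 ∧ f i * star (f j) = 0 := by
    intro i j hij
    have h1 : P j * f i = 0 := by
      rw [← hPf i, ← mul_assoc, hPP j i (Ne.symm hij), zero_mul]
    have h2 : star (f i) * P j = 0 := by
      have h := congrArg star h1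
      rw [star_mul, hPsa j, star_zero] at h
      exact h
    have h3 : f i * P j = 0 := by
      rw [← hfP i, mul_assoc, hPP i j hij, mul_zero]
    constructor
    · conv_lhs => rw [← hPf j]
      rw [← mul_assoc, h2, zero_mul]
    · have h4 : star (f j) = P j * star (f j) := by
        conv_lhs => rw [← hfP j]
        rw [star_mul, hPsa j]
      rw [h4, ← mul_assoc, h3, zero_mul]
  have hfnorm : ∀ i, ‖f i‖ ≤ ‖y'‖ := by
    intro i
    induction i using Fin.cases with
    | zero => simp [hf_def]
    | succ j =>
      have heq1 : f (Fin.succ j) = star (u j) * y' * u j := by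
        simp only [hf_def, Fin.cases_succ]
        rw [hsstar j]
        show star (u j) * e * y' * (e * u j) = _
        calc star (u j) * e * y' * (e * u j)
            = star (u j) * (e * y' * e) * u j := by simp only [mul_assoc]
          _ = star (u j) * y' * u j := by rw [hy']
      rw [heq1, CStarRing.norm_mul_mem_unitary _ (hu j).1,
        CStarRing.norm_mem_unitary_mul y' (Unitary.star_mem (hu j).1)]
  -- the convex combination
  have hxmem : ∀ i : Fin (K + 1),
      y + f i ∈ {z | ∃ w ∈ unitary A, z = star w * (y + y') * w} := by
    intro i
    induction i using Fin.cases with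
    | zero =>
      refine ⟨1, one_mem _, ?_⟩
      simp [hf_def]
    | succ j =>
      refine ⟨v j, hvmem j, ?_⟩
      rw [hvsa j]
      have hdist : v j * (y + y') * v j = v j * y * v j + v j * y' * v j := by
        noncomm_ring
      rw [hdist, hvyv j, hvy'v j]
      simp [hf_def]
  set c : ℝ := ((K : ℝ) + 1)⁻¹ with hc_def
  have hKpos : (0 : ℝ) < (K : ℝ) + 1 := by positivity
  set b : A := c • ∑ i : Fin (K + 1), (y + f i) with hb_def
  have hb : b ∈ convexHull ℝ {z | ∃ w ∈ unitary A, z = star w * (y + y') * w} := by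
    have hcm := Finset.centerMass_mem_convexHull (Finset.univ : Finset (Fin (K + 1)))
      (w := fun _ => (1 : ℝ)) (z := fun i => y + f i) (fun i _ => zero_le_one)
      (by simp; positivity) (fun i _ => hxmem i)
    have : (Finset.univ : Finset (Fin (K + 1))).centerMass (fun _ => (1 : ℝ))
        (fun i => y + f i) = b := by
      rw [Finset.centerMass, hb_def]
      simp [Finset.sum_const, Finset.card_univ, hc_def, add_comm]
    rwa [this] at hcm
  have hsum' : ∑ i : Fin (K + 1), (y + f i) = (K + 1) • y + ∑ i, f i := by
    rw [Finset.sum_add_distrib, Finset.sum_const, Finset.card_univ, Fintype.card_fin]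
  have hyb : y - b = -(c • ∑ i, f i) := by
    rw [hb_def, hsum', smul_add]
    have h5 : c • ((K + 1) • y) = y := by
      rw [← Nat.cast_smul_eq_nsmul ℝ (K + 1) y, smul_smul, hc_def]
      push_cast
      rw [inv_mul_cancel₀ (ne_of_gt hKpos), one_smul]
    rw [h5]
    abel
  have hnorm : ‖∑ i, f i‖ ≤ ‖y'‖ := norm_sum_le_of_orth f horth (norm_nonneg y') hfnorm
  calc Metric.infDist y (convexHull ℝ {z | ∃ v ∈ unitary A, z = star v * (y + y') * v})
      ≤ dist y b := Metric.infDist_le_dist_of_mem hb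
    _ = ‖y - b‖ := dist_eq_norm y b
    _ = c * ‖∑ i, f i‖ := by
        rw [hyb, norm_neg, norm_smul, Real.norm_of_nonneg (by positivity)]
    _ ≤ c * ‖y'‖ := by
        exact mul_le_mul_of_nonneg_left hnorm (by positivity)
    _ = ‖y'‖ / ((K : ℝ) + 1) := by rw [hc_def]; ring
end

section
/- Let (d_{ij}) be an l×l matrix with entries in [0,1] such that every column sums to 1 and the i-th row sums to 1 + ε'ᵢ where |ε'ᵢ| ≤ ε₂ < 1 for all i. Then there exists a doubly stochastic l×l matrix (d'_{ij}) such that Σᵢ |d_{ij} − d'_{ij}| ≤ 2ε₂ for every column j. -/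
/-- an almost doubly stochastic matrix (column sums 1, row sums 1 + ε'ᵢ with
|ε'ᵢ| ≤ ε₂ < 1) can be corrected to a doubly stochastic matrix with column-wise ℓ¹-error
at most 2ε₂. -/
theorem exists_doublyStochastic_correction {l : ℕ} (hl : 0 < l)
    (d : Fin l → Fin l → ℝ) (ε' : Fin l → ℝ) (ε₂ : ℝ)
    (hd0 : ∀ i j, 0 ≤ d i j) (hd1 : ∀ i j, d i j ≤ 1)
    (hcol : ∀ j, ∑ i, d i j = 1)
    (hrow : ∀ i, ∑ j, d i j = 1 + ε' i)
    (hε' : ∀ i, |ε' i| ≤ ε₂) (hε₂ : ε₂ < 1) :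
    ∃ d' : Fin l → Fin l → ℝ, (∀ i j, 0 ≤ d' i j) ∧
      (∀ i, ∑ j, d' i j = 1) ∧ (∀ j, ∑ i, d' i j = 1) ∧
      ∀ j, ∑ i, |d i j - d' i j| ≤ 2 * ε₂ := by
  classical
  have hε₂0 : 0 ≤ ε₂ := le_trans (abs_nonneg _) (hε' ⟨0, hl⟩)
  set p : Fin l → ℝ := fun i => max (ε' i) 0 with hp_def
  set n : Fin l → ℝ := fun i => max (-ε' i) 0 with hn_def
  have hp0 : ∀ i, 0 ≤ p i := fun i => le_max_right _ _
  have hn0 : ∀ i, 0 ≤ n i := fun i => le_max_right _ _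
  have hp1 : ∀ i, (0:ℝ) < 1 + p i := fun i => by have := hp0 i; linarith
  have hpε : ∀ i, p i ≤ ε₂ := fun i =>
    max_le (le_trans (le_abs_self _) (hε' i)) hε₂0
  have hpn : ∀ i, p i - n i = ε' i := by
    intro i
    rcases le_total (ε' i) 0 with h | h
    · simp [hp_def, hn_def, max_eq_right h, max_eq_left (neg_nonneg.mpr h)]
    · simp [hp_def, hn_def, max_eq_left h, max_eq_right (neg_nonpos.mpr h)]
  have hsum0 : ∑ i, ε' i = 0 := by
    have h1 : ∑ i, (1 + ε' i) = (l : ℝ) := by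
      calc ∑ i, (1 + ε' i) = ∑ i, ∑ j, d i j := by simp [hrow]
        _ = ∑ j, ∑ i, d i j := Finset.sum_comm
        _ = (l : ℝ) := by simp [hcol]
    rw [Finset.sum_add_distrib] at h1
    simp at h1
    linarith
  set S : ℝ := ∑ i, p i with hS_def
  set b : Fin l → ℝ := fun j => ∑ i, d i j * (p i / (1 + p i)) with hb_def
  have hkey : ∀ i, 1 + ε' i = (1 - n i) * (1 + p i) := by
    intro i
    rcases le_total (ε' i) 0 with h | h
    · simp [hp_def, hn_def, max_eq_right h, max_eq_left (neg_nonneg.mpr h)]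
    · simp [hp_def, hn_def, max_eq_left h, max_eq_right (neg_nonpos.mpr h)]
  have hkey2 : ∀ i, p i / (1 + p i) * (1 + ε' i) = p i := by
    intro i
    rcases le_total (ε' i) 0 with h | h
    · simp [hp_def, max_eq_right h]
    · have hq : p i = ε' i := max_eq_left h
      have := hp1 i
      field_simp [hq]
      rw [hq]
  have hb0 : ∀ j, 0 ≤ b j := by
    intro j
    apply Finset.sum_nonneg
    intro i _
    exact mul_nonneg (hd0 i j) (div_nonneg (hp0 i) (le_of_lt (hp1 i)))
  have hbε : ∀ j, b j ≤ ε₂ := by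
    intro j
    calc b j ≤ ∑ i, d i j * ε₂ := by
          apply Finset.sum_le_sum
          intro i _
          apply mul_le_mul_of_nonneg_left _ (hd0 i j)
          calc p i / (1 + p i) ≤ p i := div_le_self (hp0 i) (by have := hp0 i; linarith)
            _ ≤ ε₂ := hpε i
      _ = ε₂ := by rw [← Finset.sum_mul, hcol j, one_mul]
  have hbS : ∑ j, b j = S := by
    calc ∑ j, b j = ∑ i, ∑ j, d i j * (p i / (1 + p i)) := Finset.sum_comm
      _ = ∑ i, (p i / (1 + p i)) * (1 + ε' i) := by
          apply Finset.sum_congr rfl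
          intro i _
          rw [← Finset.sum_mul, hrow i]; ring
      _ = S := Finset.sum_congr rfl fun i _ => hkey2 i
  have hnS : ∑ i, n i = S := by
    have : ∑ i, (p i - n i) = 0 := by
      rw [Finset.sum_congr rfl fun i _ => hpn i]; exact hsum0
    rw [Finset.sum_sub_distrib] at this
    simp only [hS_def]
    linarith
  have hS0 : 0 ≤ S := Finset.sum_nonneg fun i _ => hp0 i
  rcases eq_or_lt_of_le hS0 with hS | hS
  · -- S = 0 : all ε' i = 0, d is already doubly stochastic
    have hpz : ∀ i, p i = 0 := by
      intro i
      have := (Finset.sum_eq_zero_iff_of_nonneg (fun i _ => hp0 i)).mp hS.symm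
      exact this i (Finset.mem_univ i)
    have hnz : ∀ i, n i = 0 := by
      intro i
      have h0 : ∑ i, n i = 0 := by rw [hnS, ← hS]
      exact (Finset.sum_eq_zero_iff_of_nonneg (fun i _ => hn0 i)).mp h0 i
        (Finset.mem_univ i)
    have hεz : ∀ i, ε' i = 0 := by
      intro i; rw [← hpn i, hpz i, hnz i]; ring
    refine ⟨d, hd0, ?_, hcol, ?_⟩
    · intro i; rw [hrow i, hεz i]; ring
    · intro j; simp; linarith
  · -- S > 0
    set f : Fin l → Fin l → ℝ := fun i j => d i j / (1 + p i) + n i * (b j / S)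
      with hf_def
    have hf0 : ∀ i j, 0 ≤ f i j := by
      intro i j
      exact add_nonneg (div_nonneg (hd0 i j) (le_of_lt (hp1 i)))
        (mul_nonneg (hn0 i) (div_nonneg (hb0 j) hS0))
    refine ⟨f, hf0, ?_, ?_, ?_⟩
    · -- row sums
      intro i
      have : ∑ j, f i j = (1 + ε' i) / (1 + p i) + n i * (S / S) := by
        rw [hf_def]
        rw [Finset.sum_add_distrib, ← Finset.sum_div, hrow i, ← Finset.mul_sum,
          ← Finset.sum_div, hbS]
      rw [this, div_self (ne_of_gt hS), hkey i]
      have h1 := hp1 i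
      field_simp
      ring
    · -- column sums
      intro j
      have hsplit : ∀ i, d i j / (1 + p i) = d i j - d i j * (p i / (1 + p i)) := by
        intro i
        have := hp1 i
        field_simp
        ring
      have : ∑ i, f i j = (1 - b j) + (∑ i, n i) * (b j / S) := by
        rw [hf_def]
        rw [Finset.sum_add_distrib, ← Finset.sum_mul]
        congr 1
        rw [Finset.sum_congr rfl fun i _ => hsplit i, Finset.sum_sub_distrib, hcol j]
      rw [this, hnS, mul_div_cancel₀ _ (ne_of_gt hS)]
      ring
    · -- error bound
      intro j
      have hterm : ∀ i, |d i j - f i j| ≤ d i j * (p i / (1 + p i)) + n i * (b j / S) := by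
        intro i
        have heq : d i j - f i j = d i j * (p i / (1 + p i)) - n i * (b j / S) := by
          rw [hf_def]
          have := hp1 i
          field_simp
          ring
        rw [heq]
        calc |d i j * (p i / (1 + p i)) - n i * (b j / S)|
            ≤ |d i j * (p i / (1 + p i))| + |n i * (b j / S)| := abs_sub _ _
          _ = d i j * (p i / (1 + p i)) + n i * (b j / S) := by
              rw [abs_of_nonneg, abs_of_nonneg]
              · exact mul_nonneg (hn0 i) (div_nonneg (hb0 j) hS0)
              · exact mul_nonneg (hd0 i j) (div_nonneg (hp0 i) (le_of_lt (hp1 i)))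
      calc ∑ i, |d i j - f i j|
          ≤ ∑ i, (d i j * (p i / (1 + p i)) + n i * (b j / S)) :=
            Finset.sum_le_sum fun i _ => hterm i
        _ = b j + (∑ i, n i) * (b j / S) := by
            rw [Finset.sum_add_distrib, ← Finset.sum_mul]
        _ = 2 * b j := by rw [hnS, mul_div_cancel₀ _ (ne_of_gt hS)]; ring
        _ ≤ 2 * ε₂ := by have := hbε j; linarith
end

section
/- Let A be a unital C*-algebra with a unique tracial state τ, let p₁,...,p_l be mutually orthogonal projections summing to 1_A, with all pᵢ mutually unitarily equivalent (hence τ(pᵢ) = 1/l), and let x = Σᵢ λᵢpᵢ, y = Σᵢ μᵢpᵢ. Suppose φ : A → A is a unital positive linear map with ‖φ(y) − x‖ < ε₁ and |τ(φ(Q_k)) − τ(Q_k)| ≤ s·ε₂ for each spectral projection Q_k of y (the sum of those pᵢ with μᵢ equal to a fixed value), where s = min_k τ(Q_k). Then for each j, |λⱼ − Σᵢ μᵢ d_{ij}| < ε₁ where d_{ij} = τ(pⱼφ(Q_{k(i)})pⱼ)/τ(Q_{k(i)}) and k(i) is the index with i ∈ S_{k(i)}; moreover each column of (d_{ij}) sums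 to 1 and the i-th row sums to 1 + ε'ᵢ with |ε'ᵢ| ≤ ε₂. -/
open scoped ComplexOrder

private lemma tau_nonneg' {A : Type*} [NonUnitalRing A] [StarRing A] [PartialOrder A]
    [StarOrderedRing A] [Module ℂ A]
    (τ : A →ₗ[ℂ] ℂ) (hτpos : ∀ a, 0 ≤ τ (star a * a)) {a : A} (ha : 0 ≤ a) : 0 ≤ τ a := by
  rw [StarOrderedRing.nonneg_iff] at ha
  refine AddSubmonoid.closure_induction ?_ (by simp) ?_ ha
  · rintro x ⟨s, rfl⟩; exact hτpos s
  · intro x y _ _ hx hy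
    rw [map_add]; exact add_nonneg hx hy

private lemma tau_herm {A : Type*} [CStarAlgebra A] [PartialOrder A] [StarOrderedRing A]
    (τ : A →ₗ[ℂ] ℂ) (hτpos : ∀ a, 0 ≤ τ (star a * a)) (a b : A) :
    τ (star b * a) = (starRingEnd ℂ) (τ (star a * b)) := by
  have him : ∀ c : A, (τ (star c * c)).im = 0 := fun c => ((Complex.nonneg_iff.mp (hτpos c)).2).symm
  have e1 : τ (star (a + b) * (a + b)) =
      τ (star a * a) + τ (star a * b) + τ (star b * a) + τ (star b * b) := by
    simp only [star_add, add_mul, mul_add, map_add]; ring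
  have e2 : τ (star (a + Complex.I • b) * (a + Complex.I • b)) =
      τ (star a * a) + Complex.I * τ (star a * b) - Complex.I * τ (star b * a)
        + τ (star b * b) := by
    simp only [star_add, star_smul, Complex.star_def, Complex.conj_I, add_mul, mul_add,
      neg_smul, neg_mul, mul_neg, smul_mul_assoc, mul_smul_comm, smul_smul,
      Complex.I_mul_I, map_add, map_neg, map_smul, smul_eq_mul, neg_one_smul, map_sub]
    ring_nf
    rw [Complex.I_sq]
    ring
  have h1 := him (a + b); rw [e1] at h1
  have h2 := him (a + Complex.I • b); rw [e2] at h2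
  simp only [Complex.add_im, Complex.sub_im, Complex.mul_im, Complex.I_re, Complex.I_im,
    him a, him b, zero_mul, one_mul, add_zero, zero_add] at h1 h2
  apply Complex.ext <;>
    simp only [Complex.conj_re, Complex.conj_im] <;> linarith

private lemma tau_cs {A : Type*} [CStarAlgebra A] [PartialOrder A] [StarOrderedRing A]
    (τ : A →ₗ[ℂ] ℂ) (hτpos : ∀ a, 0 ≤ τ (star a * a)) (a b : A) :
    ‖τ (star a * b)‖ ^ 2 ≤ (τ (star a * a)).re * (τ (star b * b)).re := by
  have hre : ∀ c : A, 0 ≤ (τ (star c * c)).re := fun c => (Complex.nonneg_iff.mp (hτpos c)).1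
  by_cases hz : τ (star a * b) = 0
  · rw [hz]; simpa using mul_nonneg (hre a) (hre b)
  · set z := τ (star a * b) with hzdef
    have habsz : (0:ℝ) < ‖z‖ := norm_pos_iff.mpr hz
    set c : ℂ := (‖z‖ : ℂ) / (starRingEnd ℂ) z with hc
    have hconjz : (starRingEnd ℂ) z ≠ 0 := by simpa using hz
    have hcz : (starRingEnd ℂ) c * z = (‖z‖ : ℂ) := by
      rw [hc, map_div₀, Complex.conj_conj, Complex.conj_ofReal]
      field_simp
    have hcc : (starRingEnd ℂ) c * c = 1 := by
      rw [hc, map_div₀, Complex.conj_conj, Complex.conj_ofReal]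
      field_simp
      rw [Complex.mul_conj']
    set a' : A := c • a with ha'
    have hBa'b : τ (star a' * b) = (‖z‖ : ℂ) := by
      rw [ha', star_smul, smul_mul_assoc, map_smul, smul_eq_mul, Complex.star_def, ← hzdef, hcz]
    have hBba' : τ (star b * a') = (‖z‖ : ℂ) := by
      rw [tau_herm τ hτpos a' b, hBa'b, Complex.conj_ofReal]
    have hBa'a' : τ (star a' * a') = τ (star a * a) := by
      rw [ha', star_smul, smul_mul_assoc, mul_smul_comm, map_smul, map_smul, smul_eq_mul,
        smul_eq_mul, ← mul_assoc, Complex.star_def, hcc, one_mul]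
    have key : ∀ t : ℝ, 0 ≤ (τ (star a * a)).re * (t * t)
        + (2 * ‖z‖) * t + (τ (star b * b)).re := by
      intro t
      have h := hτpos ((t : ℂ) • a' + b)
      have hexp : τ (star ((t : ℂ) • a' + b) * ((t : ℂ) • a' + b))
          = ((t * t : ℝ) : ℂ) * τ (star a * a)
            + ((2 * t : ℝ) : ℂ) * (‖z‖ : ℂ) + τ (star b * b) := by
        simp only [star_add, star_smul, add_mul, mul_add, smul_mul_assoc, mul_smul_comm,
          map_add, map_smul, smul_eq_mul, smul_smul, Complex.star_def, Complex.conj_ofReal,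
          hBa'b, hBba', hBa'a']
        push_cast; ring
      rw [hexp] at h
      have h' := (Complex.nonneg_iff.mp h).1
      simp only [Complex.add_re, Complex.re_ofReal_mul, Complex.ofReal_re] at h'
      linarith
    have hdisc := discrim_le_zero key
    rw [discrim] at hdisc
    nlinarith [habsz.le]

private lemma corner_bound {A : Type*} [CStarAlgebra A] [PartialOrder A] [StarOrderedRing A]
    (τ : A →ₗ[ℂ] ℂ) (hτpos : ∀ a, 0 ≤ τ (star a * a)) {p : A}
    (hidem : p * p = p) (hstar : star p = p) (c : A) :
    ‖τ (p * c * p)‖ ≤ ‖c‖ * (τ p).re := by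
  have mono_re : ∀ x y : A, x ≤ y → (τ x).re ≤ (τ y).re := by
    intro x y hxy
    have h := tau_nonneg' τ hτpos (sub_nonneg.mpr hxy)
    have := (Complex.nonneg_iff.mp h).1
    rw [map_sub, Complex.sub_re] at this
    linarith
  have hppos : (0:A) ≤ p := by rw [← hidem, ← hstar]; nth_rewrite 2 [hstar]; exact star_mul_self_nonneg p
  have hpre : 0 ≤ (τ p).re := (Complex.nonneg_iff.mp (tau_nonneg' τ hτpos hppos)).1
  have h1 : τ (p * c * p) = τ (star p * (c * p)) := by rw [hstar, mul_assoc]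
  have cs := tau_cs τ hτpos p (c * p)
  rw [← h1, hstar, hidem] at cs
  have h2 : star (c * p) * (c * p) = p * (star c * c) * p := by
    rw [star_mul, hstar]; noncomm_ring
  rw [h2] at cs
  have hle : star c * c ≤ algebraMap ℝ A (‖c‖ * ‖c‖) := by
    have h3 := IsSelfAdjoint.le_algebraMap_norm_self (a := star c * c) (IsSelfAdjoint.star_mul_self c)
    rwa [CStarRing.norm_star_mul_self] at h3
  have h4 : p * (star c * c) * p ≤ ((‖c‖ * ‖c‖ : ℝ) : ℂ) • p := by
    have h5 := star_left_conjugate_le_conjugate hle p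
    rw [hstar] at h5
    refine h5.trans_eq ?_
    rw [Algebra.algebraMap_eq_smul_one, mul_smul_comm, smul_mul_assoc, mul_one, hidem,
      show ((‖c‖ * ‖c‖ : ℝ) : ℂ) • p = (‖c‖ * ‖c‖) • p from by
        rw [show ((‖c‖ * ‖c‖ : ℝ) : ℂ) = algebraMap ℝ ℂ (‖c‖ * ‖c‖) from rfl]
        exact algebraMap_smul ℂ _ p]
  have h6 : (τ (p * (star c * c) * p)).re ≤ ‖c‖ * ‖c‖ * (τ p).re := by
    have := mono_re _ _ h4
    rwa [map_smul, smul_eq_mul, Complex.re_ofReal_mul] at this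
  have habs : 0 ≤ ‖τ (p * c * p)‖ := norm_nonneg _
  have hnc : 0 ≤ ‖c‖ := norm_nonneg c
  nlinarith [cs, h6, mul_nonneg hnc hpre]


/-- in a unital C*-algebra with a unique tracial state, a unital positive map φ
almost sending y = Σμᵢpᵢ to x = Σλᵢpᵢ and almost preserving the traces of the spectral
projections Q of y yields an almost doubly stochastic matrix (d_{ij}) with
|λⱼ − Σᵢ μᵢd_{ij}| < ε₁, column sums 1, and row sums within ε₂ of 1. -/
theorem almost_doublyStochastic_from_positive_map {A : Type*} [CStarAlgebra A]
    [PartialOrder A] [StarOrderedRing A] {l N : ℕ} (hN : 0 < N)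
    (τ : A →ₗ[ℂ] ℂ)
    (hτ1 : τ 1 = 1) (hτpos : ∀ a, 0 ≤ τ (star a * a)) (hτtr : ∀ a b, τ (a * b) = τ (b * a))
    (hτunique : ∀ τ' : A →ₗ[ℂ] ℂ, τ' 1 = 1 → (∀ a, 0 ≤ τ' (star a * a)) →
        (∀ a b, τ' (a * b) = τ' (b * a)) → τ' = τ)
    (p : Fin l → A) (hproj : ∀ i, p i * p i = p i ∧ star (p i) = p i)
    (horth : ∀ i j, i ≠ j → p i * p j = 0)
    (hsum : ∑ i, p i = 1)
    (hequiv : ∀ i j, ∃ u ∈ unitary A, star u * p i * u = p j)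
    (lam mu : Fin l → ℂ)
    (k : Fin l → Fin N) (hk : ∀ i i', k i = k i' ↔ mu i = mu i')
    (hksurj : Function.Surjective k)
    (Q : Fin N → A) (hQ : ∀ m, Q m = ∑ i ∈ Finset.univ.filter (fun i => k i = m), p i)
    (s : ℝ)
    (hs : s = Finset.univ.inf'
        (Finset.univ_nonempty_iff.mpr (Fin.pos_iff_nonempty.mp hN))
        fun m => (τ (Q m)).re)
    (φ : A →ₗ[ℂ] A) (hφ1 : φ 1 = 1) (hφpos : ∀ a : A, 0 ≤ a → 0 ≤ φ a)
    (ε₁ ε₂ : ℝ)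
    (hclose : ‖φ (∑ i, mu i • p i) - ∑ i, lam i • p i‖ < ε₁)
    (htrQ : ∀ m, ‖τ (φ (Q m)) - τ (Q m)‖ ≤ s * ε₂)
    (d : Fin l → Fin l → ℝ)
    (hd : ∀ i j, d i j = (τ (p j * φ (Q (k i)) * p j)).re / (τ (Q (k i))).re) :
    (∀ j, ‖lam j - ∑ i, (d i j : ℂ) * mu i‖ < ε₁) ∧
    (∀ j, ∑ i, d i j = 1) ∧
    (∀ i, |(∑ j, d i j) - 1| ≤ ε₂) := by
  
  classical
  -- basic facts
  have hone : (1 : A) ≠ 0 := by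
    intro h
    rw [h, map_zero] at hτ1
    exact one_ne_zero hτ1.symm
  have hl : 0 < l := by
    rcases Nat.eq_zero_or_pos l with h | h
    · subst h
      simp only [Finset.univ_eq_empty, Finset.sum_empty] at hsum
      exact absurd hsum.symm hone
    · exact h
  have hlne : (l : ℂ) ≠ 0 := Nat.cast_ne_zero.mpr hl.ne'
  have hlneR : (l : ℝ) ≠ 0 := Nat.cast_ne_zero.mpr hl.ne'
  -- trace of each projection is 1/l
  have htp : ∀ i, τ (p i) = (l : ℂ)⁻¹ := by
    have heq : ∀ i j, τ (p i) = τ (p j) := by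
      intro i j
      obtain ⟨u, hu, huu⟩ := hequiv i j
      rw [← huu, hτtr (star u * p i) u, ← mul_assoc, (Unitary.mem_iff.mp hu).2, one_mul]
    intro i
    have hsum' : (l : ℂ) * τ (p i) = 1 := by
      have h1 : ∑ j, τ (p j) = 1 := by rw [← map_sum, hsum, hτ1]
      calc (l : ℂ) * τ (p i) = ∑ _j : Fin l, τ (p i) := by
            rw [Finset.sum_const, Finset.card_univ, Fintype.card_fin, nsmul_eq_mul]
        _ = ∑ j, τ (p j) := Finset.sum_congr rfl fun j _ => (heq i j)
        _ = 1 := h1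
    exact eq_inv_of_mul_eq_one_right hsum'
  set S : Fin N → Finset (Fin l) := fun m => Finset.univ.filter (fun i => k i = m) with hS
  have hcard : ∀ m, 0 < (S m).card := by
    intro m
    obtain ⟨i, hi⟩ := hksurj m
    exact Finset.card_pos.mpr ⟨i, by simp [hS, hi]⟩
  have hcardne : ∀ m, ((S m).card : ℝ) ≠ 0 := fun m => Nat.cast_ne_zero.mpr (hcard m).ne'
  have htQ : ∀ m, τ (Q m) = (((S m).card : ℝ) / l : ℝ) := by
    intro m
    rw [hQ m, map_sum, Finset.sum_congr rfl fun i _ => htp i, Finset.sum_const, nsmul_eq_mul]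
    push_cast
    ring
  have htQre : ∀ m, (τ (Q m)).re = ((S m).card : ℝ) / l := by
    intro m; rw [htQ m, Complex.ofReal_re]
  have htQpos : ∀ m, 0 < (τ (Q m)).re := by
    intro m
    rw [htQre m]
    exact div_pos (by exact_mod_cast hcard m) (by exact_mod_cast hl)
  have hsle : ∀ m, s ≤ (τ (Q m)).re := fun m => hs ▸ Finset.inf'_le _ (Finset.mem_univ m)
  have hspos : 0 < s := by
    rw [hs, Finset.lt_inf'_iff]
    exact fun m _ => htQpos m
  have hε₂ : 0 ≤ ε₂ := by
    have h := htrQ ⟨0, hN⟩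
    have h0 := norm_nonneg (τ (φ (Q ⟨0, hN⟩)) - τ (Q ⟨0, hN⟩))
    nlinarith
  -- positivity facts
  have hppos : ∀ i, (0 : A) ≤ p i := by
    intro i
    have h := star_mul_self_nonneg (p i)
    rwa [(hproj i).2, (hproj i).1] at h
  have hQpos : ∀ m, (0 : A) ≤ Q m := fun m => by
    rw [hQ m]; exact Finset.sum_nonneg fun i _ => hppos i
  have hcorner : ∀ m j, τ (p j * φ (Q m) * p j) = ((τ (p j * φ (Q m) * p j)).re : ℂ) := by
    intro m j
    have h1 : (0 : A) ≤ p j * φ (Q m) * p j := by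
      have h := star_left_conjugate_nonneg (hφpos _ (hQpos m)) (p j)
      rwa [(hproj j).2] at h
    have h2 := tau_nonneg' τ hτpos h1
    exact Complex.ext rfl (by simp [← (Complex.nonneg_iff.mp h2).2])
  -- trace insertion
  have hins : ∀ (a : A) (j : Fin l), τ (p j * a * p j) = τ (p j * a) := by
    intro a j
    rw [hτtr (p j * a) (p j), ← mul_assoc, (hproj j).1]
  have hQsum : ∑ m, Q m = 1 := by
    rw [Finset.sum_congr rfl fun m _ => hQ m, Finset.sum_fiberwise, hsum]
  have hφQsum : ∑ m, φ (Q m) = 1 := by rw [← map_sum, hQsum, hφ1]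
  -- column sums
  have hcol : ∀ j, ∑ i, d i j = 1 := by
    intro j
    have h1 : ∑ i, d i j
        = ∑ m, ∑ i ∈ S m, ((τ (p j * φ (Q m) * p j)).re / (τ (Q m)).re) :=
      calc ∑ i, d i j = ∑ i, (τ (p j * φ (Q (k i)) * p j)).re / (τ (Q (k i))).re :=
            Finset.sum_congr rfl fun i _ => hd i j
        _ = _ := (Finset.sum_fiberwise' Finset.univ k
            (fun m => (τ (p j * φ (Q m) * p j)).re / (τ (Q m)).re)).symm
    rw [h1]
    have h2 : ∀ m, ∑ i ∈ S m, ((τ (p j * φ (Q m) * p j)).re / (τ (Q m)).re)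
        = (l : ℝ) * (τ (p j * φ (Q m) * p j)).re := by
      intro m
      rw [Finset.sum_const, nsmul_eq_mul, htQre m]
      rw [div_div_eq_mul_div, mul_div_assoc', mul_div_cancel_left₀ _ (hcardne m)]
      ring
    rw [Finset.sum_congr rfl fun m _ => h2 m, ← Finset.mul_sum, ← Complex.re_sum]
    have h3 : ∑ m, τ (p j * φ (Q m) * p j) = τ (p j) := by
      rw [← map_sum, ← Finset.sum_mul, ← Finset.mul_sum, hφQsum, mul_one, (hproj j).1]
    rw [h3, htp j]
    have : ((l : ℂ)⁻¹).re = (l : ℝ)⁻¹ := by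
      rw [show ((l : ℂ))⁻¹ = (((l : ℝ)⁻¹ : ℝ) : ℂ) by push_cast; ring, Complex.ofReal_re]
    rw [this]
    field_simp
  -- row sums
  have hrowb : ∀ i, |(∑ j, d i j) - 1| ≤ ε₂ := by
    intro i
    have hrow : ∑ j, d i j = (τ (φ (Q (k i)))).re / (τ (Q (k i))).re := by
      rw [Finset.sum_congr rfl fun j _ => hd i j, ← Finset.sum_div]
      congr 1
      rw [← Complex.re_sum]
      congr 1
      rw [Finset.sum_congr rfl fun j _ => hins (φ (Q (k i))) j, ← map_sum,
        ← Finset.sum_mul, hsum, one_mul]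
    set m := k i
    have ht := htQpos m
    have h1 : |(τ (φ (Q m))).re - (τ (Q m)).re| ≤ s * ε₂ := by
      have h2 := Complex.abs_re_le_norm (τ (φ (Q m)) - τ (Q m))
      rw [Complex.sub_re] at h2
      exact h2.trans (htrQ m)
    rw [hrow, show (τ (φ (Q m))).re / (τ (Q m)).re - 1
        = ((τ (φ (Q m))).re - (τ (Q m)).re) / (τ (Q m)).re by field_simp,
      abs_div, abs_of_pos ht, div_le_iff₀ ht]
    calc |(τ (φ (Q m))).re - (τ (Q m)).re| ≤ s * ε₂ := h1
      _ ≤ (τ (Q m)).re * ε₂ := mul_le_mul_of_nonneg_right (hsle m) hε₂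
      _ = ε₂ * (τ (Q m)).re := mul_comm _ _
  refine ⟨?_, hcol, hrowb⟩
  -- first claim
  intro j
  obtain ⟨rep, hrep⟩ : ∃ rep : Fin N → Fin l, ∀ m, k (rep m) = m :=
    ⟨Function.surjInv hksurj, Function.surjInv_eq hksurj⟩
  set ν : Fin N → ℂ := fun m => mu (rep m) with hν'
  have hν : ∀ i, mu i = ν (k i) := fun i => (hk i (rep (k i))).mp (hrep (k i)).symm
  have hy : (∑ i, mu i • p i) = ∑ m, ν m • Q m := by
    rw [Finset.sum_congr rfl fun i (_ : i ∈ Finset.univ) => by rw [hν i]]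
    rw [← Finset.sum_fiberwise Finset.univ k (fun i => ν (k i) • p i)]
    refine Finset.sum_congr rfl fun m _ => ?_
    rw [hQ m, Finset.smul_sum]
    refine Finset.sum_congr rfl fun i hi => ?_
    rw [(Finset.mem_filter.mp hi).2]
  have hτφy : τ (p j * φ (∑ i, mu i • p i) * p j)
      = ∑ m, ν m * ((τ (p j * φ (Q m) * p j)).re : ℂ) := by
    rw [hy, map_sum]
    simp only [map_smul, Finset.mul_sum, Finset.sum_mul, smul_mul_assoc, mul_smul_comm,
      map_sum, smul_eq_mul]
    exact Finset.sum_congr rfl fun m _ => by rw [← hcorner m j]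
  -- lam j = l * τ (p j x p j)
  have hx : τ (p j * (∑ i, lam i • p i)) = lam j * (l : ℂ)⁻¹ := by
    rw [Finset.mul_sum, map_sum]
    rw [Finset.sum_eq_single j]
    · rw [mul_smul_comm, map_smul, smul_eq_mul, (hproj j).1, htp j]
    · intro i _ hij
      rw [mul_smul_comm, map_smul, smul_eq_mul, horth j i (Ne.symm hij), map_zero, mul_zero]
    · intro h; exact absurd (Finset.mem_univ j) h
  -- sum of d * mu
  have hsum_d : (∑ i, (d i j : ℂ) * mu i)
      = (l : ℂ) * τ (p j * φ (∑ i, mu i • p i) * p j) := by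
    rw [hτφy, Finset.mul_sum]
    have h1 : ∑ i, (d i j : ℂ) * mu i
        = ∑ m, ∑ i ∈ S m, ((((τ (p j * φ (Q m) * p j)).re / (τ (Q m)).re : ℝ) : ℂ) * ν m) :=
      calc ∑ i, (d i j : ℂ) * mu i
          = ∑ i, ((((τ (p j * φ (Q (k i)) * p j)).re / (τ (Q (k i))).re : ℝ) : ℂ) * ν (k i)) :=
            Finset.sum_congr rfl fun i _ => by rw [hd i j, hν i]
        _ = _ := (Finset.sum_fiberwise' Finset.univ k
            (fun m => (((τ (p j * φ (Q m) * p j)).re / (τ (Q m)).re : ℝ) : ℂ) * ν m)).symm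
    rw [h1]
    refine Finset.sum_congr rfl fun m _ => ?_
    rw [Finset.sum_const, nsmul_eq_mul, htQre m]
    have hc : (((S m).card : ℕ) : ℂ) ≠ 0 := Nat.cast_ne_zero.mpr (hcard m).ne'
    push_cast
    field_simp
  -- combine
  have hxx : τ (p j * (∑ i, lam i • p i) * p j) = lam j * (l : ℂ)⁻¹ := by
    rw [hins, hx]
  set c' : A := φ (∑ i, mu i • p i) - ∑ i, lam i • p i with hc'
  have hsplit : τ (p j * c' * p j)
      = τ (p j * φ (∑ i, mu i • p i) * p j) - τ (p j * (∑ i, lam i • p i) * p j) := by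
    rw [hc', mul_sub, sub_mul, map_sub]
  have hdiff : lam j - ∑ i, (d i j : ℂ) * mu i = -((l : ℂ) * τ (p j * c' * p j)) := by
    rw [hsum_d, hsplit, hxx]
    field_simp
    ring
  rw [hdiff, norm_neg, norm_mul, Complex.norm_natCast]
  have hb := corner_bound τ hτpos (hproj j).1 (hproj j).2 c'
  have hpre : (τ (p j)).re = (l : ℝ)⁻¹ := by
    rw [htp j, show ((l : ℂ))⁻¹ = (((l : ℝ)⁻¹ : ℝ) : ℂ) by push_cast; ring, Complex.ofReal_re]
  rw [hpre] at hb
  calc (l : ℝ) * ‖τ (p j * c' * p j)‖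
      ≤ (l : ℝ) * (‖c'‖ * (l : ℝ)⁻¹) := mul_le_mul_of_nonneg_left hb (Nat.cast_nonneg l)
    _ = ‖c'‖ := by field_simp
    _ < ε₁ := hclose
end

section
/- Let A be a unital C*-algebra, p ∈ A a projection, and identify pAp with its unitization having unit p. Suppose {p₁,...,pₙ} are mutually orthogonal, mutually unitarily equivalent projections summing to p, so pAp ≅ Mₙ(p₁Ap₁). Then for every doubly stochastic n×n matrix D, there is a unital trace-preserving completely positive linear map φ_D on pAp mapping the subalgebra B = {Σᵢ λᵢpᵢ : λᵢ ∈ ℂ} into itself such that φ_D(Σᵢ μᵢpᵢ) = Σᵢ λᵢpᵢ whenever (λ₁,...,λₙ)ᵀ = D(μ₁,...,μₙ)ᵀ. -/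
/-- A map between (star) rings is completely positive if all its entrywise matrix
amplifications send positive elements (elements of the form `star b * b`) to positive
elements. -/
def IsCompletelyPositive {A B : Type*} [Ring A] [StarRing A] [Ring B] [StarRing B]
    (f : A → B) : Prop :=
  ∀ (k : ℕ) (b : Matrix (Fin k) (Fin k) A),
    ∃ c : Matrix (Fin k) (Fin k) B, (star b * b).map f = star c * c

section CPauxSection
set_option linter.unusedSectionVars false
set_option maxHeartbeats 1000000

open scoped InnerProductSpace
open WithCStarModule CStarModule

noncomputable section

namespace CPaux

variable {A : Type*} [CStarAlgebra A] [PartialOrder A] [StarOrderedRing A] {k : ℕ}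

/-- Type synonym for matrices over a C*-algebra, to carry the operator norm. -/
def MatC (A : Type*) (k : ℕ) : Type _ := Matrix (Fin k) (Fin k) A

def MatC.of (T : Matrix (Fin k) (Fin k) A) : MatC A k := T

def MatC.toMatrix (T : MatC A k) : Matrix (Fin k) (Fin k) A := T

instance : Ring (MatC A k) := inferInstanceAs (Ring (Matrix (Fin k) (Fin k) A))
instance : StarRing (MatC A k) := inferInstanceAs (StarRing (Matrix (Fin k) (Fin k) A))
instance : Algebra ℂ (MatC A k) := inferInstanceAs (Algebra ℂ (Matrix (Fin k) (Fin k) A))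
instance : StarModule ℂ (MatC A k) :=
  inferInstanceAs (StarModule ℂ (Matrix (Fin k) (Fin k) A))

/-- The action of a matrix on the C*-module `C⋆ᵐᵒᵈ(A, Fin k → A)`. -/
def act (T : MatC A k) : (C⋆ᵐᵒᵈ(A, Fin k → A)) →ₗ[ℂ] (C⋆ᵐᵒᵈ(A, Fin k → A)) where
  toFun x := (equiv A _).symm fun i => ∑ j, T.toMatrix i j * x j
  map_add' x y := by
    ext i
    simp [equiv_symm_pi_apply, mul_add, Finset.sum_add_distrib]
  map_smul' c x := by
    ext i
    simp [equiv_symm_pi_apply, Finset.smul_sum, mul_smul_comm]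

lemma act_apply (T : MatC A k) (x : C⋆ᵐᵒᵈ(A, Fin k → A)) (i : Fin k) :
    act T x i = ∑ j, T.toMatrix i j * x j := by
  simp [act, equiv_symm_pi_apply]

lemma act_norm_le (T : MatC A k) (x : C⋆ᵐᵒᵈ(A, Fin k → A)) :
    ‖act T x‖ ≤ (∑ i, ∑ j, ‖T.toMatrix i j‖) * ‖x‖ := by
  calc ‖act T x‖ ≤ ∑ i, ‖act T x i‖ := pi_norm_le_sum_norm _
    _ ≤ ∑ i, ∑ j, ‖T.toMatrix i j‖ * ‖x‖ := by
        refine Finset.sum_le_sum fun i _ => ?_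
        rw [act_apply]
        refine (norm_sum_le _ _).trans (Finset.sum_le_sum fun j _ => ?_)
        exact (norm_mul_le _ _).trans
          (by gcongr; exact norm_apply_le_norm x j)
    _ = (∑ i, ∑ j, ‖T.toMatrix i j‖) * ‖x‖ := by
        simp [Finset.sum_mul]

/-- The action as a continuous linear map. -/
def actL (T : MatC A k) : (C⋆ᵐᵒᵈ(A, Fin k → A)) →L[ℂ] (C⋆ᵐᵒᵈ(A, Fin k → A)) :=
  LinearMap.mkContinuous (act T) (∑ i, ∑ j, ‖T.toMatrix i j‖) (act_norm_le T)

lemma actL_apply (T : MatC A k) (x : C⋆ᵐᵒᵈ(A, Fin k → A)) (i : Fin k) :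
    actL T x i = ∑ j, T.toMatrix i j * x j := act_apply T x i

end CPaux

namespace CPaux

variable {A : Type*} [CStarAlgebra A] [PartialOrder A] [StarOrderedRing A] {k : ℕ}

lemma ext_cm {x y : C⋆ᵐᵒᵈ(A, Fin k → A)} (h : ∀ i, x i = y i) : x = y :=
  WithCStarModule.ext h

lemma toMatrix_one : (1 : MatC A k).toMatrix = 1 := rfl
lemma toMatrix_zero : (0 : MatC A k).toMatrix = 0 := rfl
lemma toMatrix_add (T S : MatC A k) : (T + S).toMatrix = T.toMatrix + S.toMatrix := rfl
lemma toMatrix_mul (T S : MatC A k) : (T * S).toMatrix = T.toMatrix * S.toMatrix := rfl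
lemma toMatrix_star (T : MatC A k) : (star T).toMatrix = star T.toMatrix := rfl
lemma toMatrix_algebraMap (c : ℂ) :
    (algebraMap ℂ (MatC A k) c).toMatrix = algebraMap ℂ (Matrix (Fin k) (Fin k) A) c := rfl

/-- The action as an algebra homomorphism into continuous endomorphisms. -/
def actAlg (A : Type*) [CStarAlgebra A] [PartialOrder A] [StarOrderedRing A] (k : ℕ) :
    MatC A k →ₐ[ℂ] ((C⋆ᵐᵒᵈ(A, Fin k → A)) →L[ℂ] (C⋆ᵐᵒᵈ(A, Fin k → A))) where
  toFun := actL
  map_one' := by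
    ext x : 1
    refine ext_cm fun i => ?_
    rw [actL_apply, Finset.sum_eq_single i]
    · simp [toMatrix_one, Matrix.one_apply]
    · intro j _ hj; simp [toMatrix_one, Matrix.one_apply, Ne.symm hj]
    · simp
  map_mul' T S := by
    ext x : 1
    refine ext_cm fun i => ?_
    rw [ContinuousLinearMap.mul_apply]
    conv_rhs => rw [actL_apply]
    simp only [actL_apply]
    simp only [toMatrix_mul, Matrix.mul_apply, Finset.sum_mul, mul_assoc, Finset.mul_sum]
    exact Finset.sum_comm
  map_zero' := by
    ext x : 1
    refine ext_cm fun i => ?_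
    rw [ContinuousLinearMap.zero_apply, actL_apply]
    simp only [toMatrix_zero, Matrix.zero_apply, zero_mul, Finset.sum_const_zero]
    rfl
  map_add' T S := by
    ext x : 1
    refine ext_cm fun i => ?_
    rw [ContinuousLinearMap.add_apply, WithCStarModule.add_apply, actL_apply, actL_apply,
      actL_apply]
    simp [toMatrix_add, Matrix.add_apply, add_mul, Finset.sum_add_distrib]
  commutes' c := by
    ext x : 1
    refine ext_cm fun i => ?_
    rw [actL_apply, Algebra.algebraMap_eq_smul_one (A := (C⋆ᵐᵒᵈ(A, Fin k → A)) →L[ℂ] _)]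
    simp only [toMatrix_algebraMap, Matrix.algebraMap_eq_diagonal, Matrix.diagonal_apply,
      Pi.algebraMap_apply, ContinuousLinearMap.smul_apply, ContinuousLinearMap.one_apply,
      WithCStarModule.smul_apply]
    rw [Finset.sum_eq_single i]
    · rw [if_pos rfl, Algebra.smul_def]
    · intro j _ hj; simp [Ne.symm hj]
    · simp

lemma actAlg_injective : Function.Injective (actAlg A k) := by
  intro T S h
  have : ∀ j i, actL T ((equiv A _).symm (Pi.single j (1 : A))) i
      = actL S ((equiv A _).symm (Pi.single j (1 : A))) i := by
    intro j i
    rw [show actL T = actAlg A k T from rfl, show actL S = actAlg A k S from rfl, h]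
  show T.toMatrix = S.toMatrix
  ext i j
  have hj := this j i
  rw [actL_apply, actL_apply] at hj
  simpa [equiv_symm_pi_apply, Pi.single_apply, Finset.sum_ite_eq'] using hj

end CPaux

namespace CPaux

variable {A : Type*} [CStarAlgebra A] [PartialOrder A] [StarOrderedRing A] {k : ℕ}

noncomputable instance : NormedRing (MatC A k) :=
  NormedRing.induced _ _ (actAlg A k).toRingHom actAlg_injective

noncomputable instance : NormedAlgebra ℂ (MatC A k) :=
  NormedAlgebra.induced ℂ (MatC A k) ((C⋆ᵐᵒᵈ(A, Fin k → A)) →L[ℂ] (C⋆ᵐᵒᵈ(A, Fin k → A))) (actAlg A k).toNonUnitalAlgHom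

lemma norm_def (T : MatC A k) : ‖T‖ = ‖actL T‖ := rfl

lemma entry_norm_le (T : MatC A k) (i j : Fin k) :
    ‖T.toMatrix i j‖ ≤ ‖(1 : A)‖ * ‖T‖ := by
  have h1 : T.toMatrix i j = actL T ((equiv A _).symm (Pi.single j (1 : A))) i := by
    rw [actL_apply]
    simp [equiv_symm_pi_apply, Pi.single_apply, Finset.sum_ite_eq']
  rw [h1]
  calc ‖actL T ((equiv A _).symm (Pi.single j (1 : A))) i‖
      ≤ ‖actL T ((equiv A _).symm (Pi.single j (1 : A)))‖ := norm_apply_le_norm _ i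
    _ ≤ ‖actL T‖ * ‖(equiv A (Fin k → A)).symm (Pi.single j (1 : A))‖ :=
        (actL T).le_opNorm _
    _ = ‖actL T‖ * ‖(1 : A)‖ := by rw [norm_single]
    _ = ‖(1 : A)‖ * ‖T‖ := by rw [norm_def]; ring

lemma norm_le_sum_entries (T : MatC A k) : ‖T‖ ≤ ∑ i, ∑ j, ‖T.toMatrix i j‖ := by
  rw [norm_def]
  exact LinearMap.mkContinuous_norm_le _
    (Finset.sum_nonneg fun i _ => Finset.sum_nonneg fun j _ => norm_nonneg _) _

instance : CompleteSpace (MatC A k) := by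
  refine Metric.complete_of_cauchySeq_tendsto fun U hU => ?_
  have hentry : ∀ i j, CauchySeq fun m => (U m).toMatrix i j := by
    intro i j
    rw [Metric.cauchySeq_iff] at hU ⊢
    intro ε hε
    rcases hU (ε / (‖(1:A)‖ + 1)) (by positivity) with ⟨N, hN⟩
    refine ⟨N, fun m hm m' hm' => ?_⟩
    have h2 := hN m hm m' hm'
    rw [dist_eq_norm] at h2 ⊢
    have h3 : (U m).toMatrix i j - (U m').toMatrix i j = (U m - U m').toMatrix i j := rfl
    rw [h3]
    calc ‖(U m - U m').toMatrix i j‖ ≤ ‖(1:A)‖ * ‖U m - U m'‖ := entry_norm_le _ i j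
      _ ≤ (‖(1:A)‖ + 1) * ‖U m - U m'‖ := by
          nlinarith [norm_nonneg (U m - U m'), norm_nonneg (1:A)]
      _ < (‖(1:A)‖ + 1) * (ε / (‖(1:A)‖ + 1)) := by
          exact mul_lt_mul_of_pos_left h2 (by positivity)
      _ = ε := by field_simp
  choose L hL using fun i j => cauchySeq_tendsto_of_complete (hentry i j)
  refine ⟨MatC.of (Matrix.of L), ?_⟩
  rw [tendsto_iff_norm_sub_tendsto_zero]
  have hbound : ∀ m, ‖U m - MatC.of (Matrix.of L)‖
      ≤ ∑ i, ∑ j, ‖(U m).toMatrix i j - L i j‖ := by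
    intro m
    refine (norm_le_sum_entries _).trans ?_
    apply le_of_eq
    rfl
  refine squeeze_zero (fun m => norm_nonneg _) hbound ?_
  have : ∀ (i j : Fin k), Filter.Tendsto (fun m => ‖(U m).toMatrix i j - L i j‖)
      Filter.atTop (nhds 0) := by
    intro i j
    rw [← tendsto_iff_norm_sub_tendsto_zero]
    exact hL i j
  simpa using Filter.Tendsto.congr (fun m => rfl)
    (tendsto_finset_sum _ fun i _ => tendsto_finset_sum _ fun j _ => this i j)

end CPaux

namespace CPaux

/-- Key lemma: a finite sum of hermitian squares of matrices over a C*-algebra is a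
hermitian square. -/
theorem exists_sum_star_mul_self {A : Type*} [CStarAlgebra A] {k : ℕ} {ι : Type*} [Fintype ι]
    (x : ι → Matrix (Fin k) (Fin k) A) :
    ∃ c : Matrix (Fin k) (Fin k) A, ∑ t, star (x t) * x t = star c * c := by
  letI := CStarAlgebra.spectralOrder A
  letI := CStarAlgebra.spectralOrderedRing A
  letI := CStarAlgebra.spectralOrder (CStarMatrix (Fin k) (Fin k) A)
  letI := CStarAlgebra.spectralOrderedRing (CStarMatrix (Fin k) (Fin k) A)
  letI : NonUnitalContinuousFunctionalCalculus ℝ (CStarMatrix (Fin k) (Fin k) A) IsSelfAdjoint :=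
    IsSelfAdjoint.instNonUnitalIsometricContinuousFunctionalCalculus.toNonUnitalContinuousFunctionalCalculus
  letI : NonnegSpectrumClass ℝ (CStarMatrix (Fin k) (Fin k) A) := CStarAlgebra.instNonnegSpectrumClass
  have hS : (0 : CStarMatrix (Fin k) (Fin k) A) ≤ CStarMatrix.ofMatrix (∑ t, star (x t) * x t) := by
    have : CStarMatrix.ofMatrix (∑ t, star (x t) * x t)
        = ∑ t, star (CStarMatrix.ofMatrix (x t)) * CStarMatrix.ofMatrix (x t) := rfl
    rw [this]
    exact Finset.sum_nonneg fun t _ => star_mul_self_nonneg (CStarMatrix.ofMatrix (x t))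
  refine ⟨CStarMatrix.ofMatrix.symm (CFC.sqrt (CStarMatrix.ofMatrix (∑ t, star (x t) * x t))), ?_⟩
  have h1 : star (CFC.sqrt (CStarMatrix.ofMatrix (∑ t, star (x t) * x t)))
      * CFC.sqrt (CStarMatrix.ofMatrix (∑ t, star (x t) * x t))
      = CStarMatrix.ofMatrix (∑ t, star (x t) * x t) := by
    rw [(IsSelfAdjoint.of_nonneg (CFC.sqrt_nonneg _)).star_eq]
    exact CFC.sqrt_mul_sqrt_self _ hS
  exact h1.symm

end CPaux

end
end CPauxSection

set_option maxHeartbeats 1000000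

/-- given mutually orthogonal, mutually unitarily equivalent projections
P₁,...,Pₙ summing to a projection p, every doubly stochastic matrix D induces a unital
trace-preserving completely positive map φ_D on the corner pAp which maps the span
B = {Σ λᵢPᵢ} into itself and sends Σ μᵢPᵢ to Σ λᵢPᵢ where λ = Dμ. -/
theorem exists_ucp_corner_map_of_doublyStochastic {A : Type*} [CStarAlgebra A] {n : ℕ}
    (p : A) (hp : p * p = p ∧ star p = p)
    (P : Fin n → A) (hP : ∀ i, P i * P i = P i ∧ star (P i) = P i)
    (ho : ∀ i j, i ≠ j → P i * P j = 0) (hsum : ∑ i, P i = p)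
    (hequiv : ∀ i j, ∃ u ∈ unitary A, star u * P i * u = P j)
    (D : Fin n → Fin n → ℝ) (hD0 : ∀ i j, 0 ≤ D i j)
    (hDr : ∀ i, ∑ j, D i j = 1) (hDc : ∀ j, ∑ i, D i j = 1) :
    ∃ φ : A →ₗ[ℂ] A, φ p = p ∧ IsCompletelyPositive φ ∧
      (∀ a, φ a = φ (p * a * p)) ∧ (∀ a, p * φ a * p = φ a) ∧
      (∀ lam : Fin n → ℂ, ∃ lam' : Fin n → ℂ,
        φ (∑ i, lam i • P i) = ∑ i, lam' i • P i) ∧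
      (∀ mu lam : Fin n → ℂ, (∀ i, lam i = ∑ j, (D i j : ℂ) * mu j) →
        φ (∑ i, mu i • P i) = ∑ i, lam i • P i) ∧
      ∀ τ : A →ₗ[ℂ] ℂ, (∀ a b, τ (a * b) = τ (b * a)) →
        ∀ a, τ (φ (p * a * p)) = τ (p * a * p) := by
  classical
  obtain ⟨hp2, hps⟩ := hp
  choose u hu hui using hequiv
  have huu : ∀ i j, star (u i j) * u i j = 1 := fun i j => (Unitary.mem_iff.mp (hu i j)).1
  have huu' : ∀ i j, u i j * star (u i j) = 1 := fun i j => (Unitary.mem_iff.mp (hu i j)).2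
  set v : Fin n → Fin n → A := fun i j => P i * u i j with hv
  -- basic projection facts
  have hPp : ∀ i, P i * p = P i := by
    intro i
    rw [← hsum, Finset.mul_sum]
    rw [Finset.sum_eq_single i]
    · exact (hP i).1
    · intro j _ hj; exact ho i j (Ne.symm hj)
    · simp
  have hpP : ∀ i, p * P i = P i := by
    intro i
    rw [← hsum, Finset.sum_mul]
    rw [Finset.sum_eq_single i]
    · exact (hP i).1
    · intro j _ hj; exact ho j i hj
    · simp
  have hvv : ∀ i j, v i j * star (v i j) = P i := by
    intro i j
    simp only [hv, star_mul, (hP i).2]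
    calc P i * u i j * (star (u i j) * P i) = P i * (u i j * star (u i j)) * P i := by
          noncomm_ring
      _ = P i := by rw [huu' i j]; rw [mul_one, (hP i).1]
  have hvv' : ∀ i j, star (v i j) * v i j = P j := by
    intro i j
    simp only [hv, star_mul, (hP i).2]
    calc star (u i j) * P i * (P i * u i j) = star (u i j) * (P i * P i) * u i j := by
          noncomm_ring
      _ = star (u i j) * P i * u i j := by rw [(hP i).1]
      _ = P j := hui i j
  have hvP : ∀ i j, v i j * P j = v i j := by
    intro i j
    rw [← hui i j]
    calc P i * u i j * (star (u i j) * P i * u i j)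
        = P i * (u i j * star (u i j)) * P i * u i j := by noncomm_ring
      _ = P i * u i j := by rw [huu' i j, mul_one, (hP i).1]
  have hPv : ∀ i j, P i * v i j = v i j := by
    intro i j
    show P i * (P i * u i j) = P i * u i j
    rw [← mul_assoc, (hP i).1]
  have hvp : ∀ i j, v i j * p = v i j := by
    intro i j
    rw [← hvP i j, mul_assoc, hPp j, hvP i j]
  have hpv : ∀ i j, p * v i j = v i j := by
    intro i j
    rw [← hPv i j, ← mul_assoc, hpP i, hPv i j]
  have hpsv : ∀ i j, p * star (v i j) = star (v i j) := by
    intro i j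
    have := congrArg star (hvp i j)
    rwa [star_mul, hps] at this
  have hsvp : ∀ i j, star (v i j) * p = star (v i j) := by
    intro i j
    have := congrArg star (hpv i j)
    rwa [star_mul, hps] at this
  -- the map
  set φ : A →ₗ[ℂ] A :=
    { toFun := fun a => ∑ i, ∑ j, ((D i j : ℝ) : ℂ) • (v i j * a * star (v i j))
      map_add' := by
        intro a b
        simp [mul_add, add_mul, smul_add, Finset.sum_add_distrib]
      map_smul' := by
        intro c a
        simp only [RingHom.id_apply, Finset.smul_sum]
        congr 1; ext i; congr 1; ext j
        rw [smul_comm]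
        congr 1
        rw [mul_smul_comm, smul_mul_assoc] } with hφ
  have hφ_apply : ∀ a, φ a = ∑ i, ∑ j, ((D i j : ℝ) : ℂ) • (v i j * a * star (v i j)) :=
    fun a => rfl
  -- action on the projections
  have hφP : ∀ m, φ (P m) = ∑ i, ((D i m : ℝ) : ℂ) • P i := by
    intro m
    have key : ∀ i j, v i j * P m * star (v i j) = if j = m then P i else 0 := by
      intro i j
      by_cases h : j = m
      · subst h; rw [hvP, hvv, if_pos rfl]
      · rw [← hvP i j, mul_assoc (v i j) (P j) (P m), ho j m h, mul_zero, zero_mul,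
          if_neg h]
    rw [hφ_apply]
    refine Finset.sum_congr rfl fun i _ => ?_
    rw [Finset.sum_eq_single m]
    · rw [key i m, if_pos rfl]
    · intro j _ hj; rw [key i j, if_neg hj, smul_zero]
    · simp
  have hφB : ∀ mu : Fin n → ℂ,
      φ (∑ i, mu i • P i) = ∑ i, (∑ j, ((D i j : ℝ) : ℂ) * mu j) • P i := by
    intro mu
    rw [map_sum]
    have h1 : ∀ m, φ (mu m • P m) = ∑ i, (((D i m : ℝ) : ℂ) * mu m) • P i := by
      intro m
      rw [map_smul, hφP, Finset.smul_sum]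
      refine Finset.sum_congr rfl fun i _ => ?_
      rw [smul_smul, mul_comm]
    calc ∑ m, φ (mu m • P m) = ∑ m, ∑ i, (((D i m : ℝ) : ℂ) * mu m) • P i :=
          Finset.sum_congr rfl fun m _ => h1 m
      _ = ∑ i, ∑ m, (((D i m : ℝ) : ℂ) * mu m) • P i := Finset.sum_comm
      _ = ∑ i, (∑ j, ((D i j : ℝ) : ℂ) * mu j) • P i := by
          refine Finset.sum_congr rfl fun i _ => ?_
          rw [Finset.sum_smul]
  refine ⟨φ, ?_, ?_, ?_, ?_, ?_, ?_, ?_⟩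
  · -- φ p = p
    rw [hφ_apply]
    calc ∑ i, ∑ j, ((D i j : ℝ) : ℂ) • (v i j * p * star (v i j))
        = ∑ i, ∑ j, ((D i j : ℝ) : ℂ) • P i := by
          refine Finset.sum_congr rfl fun i _ => Finset.sum_congr rfl fun j _ => ?_
          rw [hvp, hvv]
      _ = ∑ i, P i := by
          refine Finset.sum_congr rfl fun i _ => ?_
          rw [← Finset.sum_smul]
          have : ∑ j, ((D i j : ℝ) : ℂ) = ((∑ j, D i j : ℝ) : ℂ) := by push_cast; ring
          rw [this, hDr i]
          norm_num
      _ = p := hsum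
  · -- completely positive
    intro k b
    set x : Fin n × Fin n → Matrix (Fin k) (Fin k) A := fun t =>
      ((Real.sqrt (D t.1 t.2) : ℝ) : ℂ) •
        (b * Matrix.diagonal (fun _ => star (v t.1 t.2))) with hx
    obtain ⟨c, hc⟩ := CPaux.exists_sum_star_mul_self x
    refine ⟨c, ?_⟩
    rw [← hc]
    ext K L
    rw [Matrix.map_apply, Matrix.sum_apply, hφ_apply, Fintype.sum_prod_type]
    refine Finset.sum_congr rfl fun i _ => Finset.sum_congr rfl fun j _ => ?_
    rw [Matrix.mul_apply (M := star b) (N := b), Finset.mul_sum, Finset.sum_mul,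
      Finset.smul_sum, Matrix.mul_apply (M := star (x (i, j))) (N := x (i, j))]
    refine Finset.sum_congr rfl fun m _ => ?_
    have hxe : ∀ m' l, x (i, j) m' l
        = ((Real.sqrt (D i j) : ℝ) : ℂ) • (b m' l * star (v i j)) := by
      intro m' l
      rw [hx]
      simp only [Matrix.smul_apply, Matrix.mul_diagonal]
    have hz : star ((Real.sqrt (D i j) : ℝ) : ℂ) * ((Real.sqrt (D i j) : ℝ) : ℂ)
        = ((D i j : ℝ) : ℂ) := by
      rw [Complex.star_def, Complex.conj_ofReal, ← Complex.ofReal_mul,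
        Real.mul_self_sqrt (hD0 i j)]
    have hterm : star (x (i, j) m K) * x (i, j) m L
        = ((D i j : ℝ) : ℂ) • (v i j * star (b m K) * (b m L * star (v i j))) := by
      rw [hxe, hxe, star_smul, star_mul (b m K) (star (v i j)), star_star (v i j),
        smul_mul_smul_comm, hz]
    simp only [Matrix.star_apply]
    rw [hterm]
    congr 1
    simp only [mul_assoc]
  · -- φ a = φ (p * a * p)
    intro a
    rw [hφ_apply, hφ_apply]
    refine Finset.sum_congr rfl fun i _ => Finset.sum_congr rfl fun j _ => ?_
    congr 1
    calc v i j * a * star (v i j)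
        = (v i j * p) * a * (p * star (v i j)) := by rw [hvp, hpsv]
      _ = v i j * (p * a * p) * star (v i j) := by noncomm_ring
  · -- p * φ a * p = φ a
    intro a
    rw [hφ_apply, Finset.mul_sum, Finset.sum_mul]
    refine Finset.sum_congr rfl fun i _ => ?_
    rw [Finset.mul_sum, Finset.sum_mul]
    refine Finset.sum_congr rfl fun j _ => ?_
    rw [mul_smul_comm, smul_mul_assoc]
    congr 1
    calc p * (v i j * a * star (v i j)) * p
        = (p * v i j) * a * (star (v i j) * p) := by noncomm_ring
      _ = v i j * a * star (v i j) := by rw [hpv, hsvp]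
  · -- maps B into B
    intro lam
    exact ⟨fun i => ∑ j, ((D i j : ℝ) : ℂ) * lam j, hφB lam⟩
  · -- the D-action
    intro mu lam hlam
    rw [hφB mu]
    refine Finset.sum_congr rfl fun i _ => ?_
    rw [hlam i]
  · -- trace preserving
    intro τ hτ a
    have key : ∀ i j, τ (v i j * (p * a * p) * star (v i j)) = τ ((p * a * p) * P j) := by
      intro i j
      rw [mul_assoc, hτ, mul_assoc, hvv']
    rw [hφ_apply, map_sum]
    calc ∑ i, τ (∑ j, ((D i j : ℝ) : ℂ) • (v i j * (p * a * p) * star (v i j)))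
        = ∑ i, ∑ j, ((D i j : ℝ) : ℂ) * τ ((p * a * p) * P j) := by
          refine Finset.sum_congr rfl fun i _ => ?_
          rw [map_sum]
          refine Finset.sum_congr rfl fun j _ => ?_
          rw [map_smul, smul_eq_mul, key]
      _ = ∑ j, (∑ i, ((D i j : ℝ) : ℂ)) * τ ((p * a * p) * P j) := by
          rw [Finset.sum_comm]
          exact Finset.sum_congr rfl fun j _ => (Finset.sum_mul _ _ _).symm
      _ = ∑ j, τ ((p * a * p) * P j) := by
          refine Finset.sum_congr rfl fun j _ => ?_
          have : ∑ i, ((D i j : ℝ) : ℂ) = ((∑ i, D i j : ℝ) : ℂ) := by push_cast; ring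
          rw [this, hDc j]
          norm_num
      _ = τ ((p * a * p) * p) := by
          rw [← map_sum, ← Finset.mul_sum, hsum]
      _ = τ (p * a * p) := by
          rw [mul_assoc (p * a) p p, hp2]
end
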